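/- arXiv:1002.1889 — 8 statements merged into one kernel-verified Lean document; each statement's English description precedes it below -/
import Mathlib

section
/- Let (Ω, 𝓕, P) be a probability space, (f_n)_{n∈ℕ} a sequence of nonnegative a.e.-finite measurable functions, and f a nonnegative a.e.-finite measurable function such that (f_n) converges to f in probability. Let (h_n) be a sequence of forward convex combinations of (f_n) that converges P-a.e. to a measurable function g : Ω → [0,∞]. Then f ≤ g holds P-a.e. -/
open MeasureTheory Filter Set

/-- `h` is a sequence of forward convex combinations of `f`: for every `n`,
`h n` lies in the convex hull of `{f k : k ≥ n}`. -/
def FwdConvexCombos {Ω : Type*} (f h : ℕ → Ω → ℝ) : Prop :=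
  ∀ n, h n ∈ convexHull ℝ {g : Ω → ℝ | ∃ k, n ≤ k ∧ g = f k}

/-- Truncated integrals converge along convergence in measure. -/
lemma tendsto_trunc_lintegral {Ω : Type*} [MeasurableSpace Ω] (P : Measure Ω)
    [IsProbabilityMeasure P] (f : ℕ → Ω → ℝ) (flim : Ω → ℝ)
    (hfmeas : ∀ n, Measurable (f n))
    (hconv : TendstoInMeasure P f atTop flim) (M : ℝ) (A : Set Ω) :
    Tendsto (fun k => ∫⁻ ω in A, ENNReal.ofReal (min (f k ω) M) ∂P) atTop
      (nhds (∫⁻ ω in A, ENNReal.ofReal (min (flim ω) M) ∂P)) := by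
  apply tendsto_of_subseq_tendsto
  intro ns hns
  have hsub : TendstoInMeasure P (fun n => f (ns n)) atTop flim :=
    fun ε hε => (hconv ε hε).comp hns
  obtain ⟨ms, _, haesub⟩ := hsub.exists_seq_tendsto_ae
  refine ⟨ms, ?_⟩
  apply tendsto_lintegral_of_dominated_convergence (fun _ => ENNReal.ofReal M)
  · intro n
    exact ((hfmeas _).min measurable_const).ennreal_ofReal
  · intro n
    filter_upwards with ω
    exact ENNReal.ofReal_le_ofReal (min_le_right _ _)
  · rw [lintegral_const]
    exact ENNReal.mul_ne_top ENNReal.ofReal_ne_top (measure_ne_top _ _)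
  · filter_upwards [ae_restrict_of_ae haesub] with ω hω
    exact ENNReal.continuous_ofReal.continuousAt.tendsto.comp (hω.min tendsto_const_nhds)

theorem stmt3 {Ω : Type*} [MeasurableSpace Ω] (P : Measure Ω)
    [IsProbabilityMeasure P]
    (f : ℕ → Ω → ℝ) (flim : Ω → ℝ)
    (hfmeas : ∀ n, Measurable (f n)) (hfnn : ∀ n, 0 ≤ᵐ[P] f n)
    (hflimmeas : Measurable flim) (hflimnn : 0 ≤ᵐ[P] flim)
    (hconv : TendstoInMeasure P f atTop flim)
    (h : ℕ → Ω → ℝ) (g : Ω → ENNReal)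
    (hFCC : FwdConvexCombos f h) (hgmeas : Measurable g)
    (hae : ∀ᵐ ω ∂P, Tendsto (fun n => ENNReal.ofReal (h n ω)) atTop (nhds (g ω))) :
    ∀ᵐ ω ∂P, ENNReal.ofReal (flim ω) ≤ g ω := by
  have hofmin : ∀ (a : ℝ) (M : ℝ), ENNReal.ofReal (min a M)
      = min (ENNReal.ofReal a) (ENNReal.ofReal M) := by
    intro a M
    rcases le_total a M with hh | hh
    · rw [min_eq_left hh, min_eq_left (ENNReal.ofReal_le_ofReal hh)]
    · rw [min_eq_right hh, min_eq_right (ENNReal.ofReal_le_ofReal hh)]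
  -- main set-integral inequality for each truncation level
  have key : ∀ M : ℕ, ∀ A : Set Ω, MeasurableSet A →
      (∫⁻ ω in A, ENNReal.ofReal (min (flim ω) (M : ℝ)) ∂P)
        ≤ ∫⁻ ω in A, min (g ω) (ENNReal.ofReal (M : ℝ)) ∂P := by
    intro M A hA
    set I : ℕ → ENNReal := fun k => ∫⁻ ω in A, ENNReal.ofReal (min (f k ω) (M : ℝ)) ∂P with hI
    set L : ENNReal := ∫⁻ ω in A, ENNReal.ofReal (min (flim ω) (M : ℝ)) ∂P with hL
    have hIL : Tendsto I atTop (nhds L) :=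
      tendsto_trunc_lintegral P f flim hfmeas hconv (M : ℝ) A
    set b : ℕ → ENNReal := fun n => ⨅ k, ⨅ (_ : n ≤ k), I k with hb
    have hbmono : Monotone b := by
      intro m n hmn
      exact le_iInf₂ fun k hk => iInf₂_le k (hmn.trans hk)
    have hbL : (⨆ n, b n) = L := by
      rw [← hIL.liminf_eq, liminf_eq_iSup_iInf_of_nat]
    -- J n := truncated integral of h n
    set J : ℕ → ENNReal := fun n => ∫⁻ ω in A, ENNReal.ofReal (min (h n ω) (M : ℝ)) ∂P with hJ
    -- a.e. nonnegativity of all f k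
    have hnnall : ∀ᵐ ω ∂P, ∀ k, 0 ≤ f k ω := ae_all_iff.2 hfnn
    -- Step: b n ≤ J n
    have hbJ : ∀ n, b n ≤ J n := by
      intro n
      have hmem := hFCC n
      rw [convexHull_eq] at hmem
      obtain ⟨ι, t, w, z, hw0, hw1, hz, hsum⟩ := hmem
      -- choose indices
      have hz' : ∀ i, ∃ k, i ∈ t → (n ≤ k ∧ z i = f k) := by
        intro i
        by_cases hi : i ∈ t
        · obtain ⟨k, hk1, hk2⟩ := hz i hi
          exact ⟨k, fun _ => ⟨hk1, hk2⟩⟩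
        · exact ⟨0, fun hh => absurd hh hi⟩
      choose kk hkk using hz'
      have hrep : ∀ ω, h n ω = ∑ i ∈ t, w i * f (kk i) ω := by
        intro ω
        have := congrFun ((t.centerMass_eq_of_sum_1 z hw1).symm.trans hsum) ω
        rw [← this]
        rw [Finset.sum_apply]
        refine Finset.sum_congr rfl fun i hi => ?_
        rw [(hkk i hi).2]
        rfl
      -- pointwise a.e. bound
      have hpt : ∀ᵐ ω ∂P, ∑ i ∈ t, ENNReal.ofReal (w i)
            * ENNReal.ofReal (min (f (kk i) ω) (M : ℝ))
          ≤ ENNReal.ofReal (min (h n ω) (M : ℝ)) := by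
        filter_upwards [hnnall] with ω hω
        have hreal : ∑ i ∈ t, w i * min (f (kk i) ω) (M : ℝ) ≤ min (h n ω) (M : ℝ) := by
          refine le_min ?_ ?_
          · rw [hrep ω]
            exact Finset.sum_le_sum fun i hi =>
              mul_le_mul_of_nonneg_left (min_le_left _ _) (hw0 i hi)
          · calc ∑ i ∈ t, w i * min (f (kk i) ω) (M : ℝ)
                ≤ ∑ i ∈ t, w i * (M : ℝ) :=
                  Finset.sum_le_sum fun i hi =>
                    mul_le_mul_of_nonneg_left (min_le_right _ _) (hw0 i hi)
              _ = (M : ℝ) := by rw [← Finset.sum_mul, hw1, one_mul]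
        calc ∑ i ∈ t, ENNReal.ofReal (w i) * ENNReal.ofReal (min (f (kk i) ω) (M : ℝ))
            = ∑ i ∈ t, ENNReal.ofReal (w i * min (f (kk i) ω) (M : ℝ)) := by
              refine Finset.sum_congr rfl fun i hi => ?_
              rw [ENNReal.ofReal_mul (hw0 i hi)]
          _ = ENNReal.ofReal (∑ i ∈ t, w i * min (f (kk i) ω) (M : ℝ)) := by
              rw [ENNReal.ofReal_sum_of_nonneg]
              intro i hi
              exact mul_nonneg (hw0 i hi) (le_min (hω _) (Nat.cast_nonneg M))
          _ ≤ ENNReal.ofReal (min (h n ω) (M : ℝ)) := ENNReal.ofReal_le_ofReal hreal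
      calc b n = (∑ i ∈ t, ENNReal.ofReal (w i)) * b n := by
            rw [← ENNReal.ofReal_sum_of_nonneg hw0, hw1, ENNReal.ofReal_one, one_mul]
        _ = ∑ i ∈ t, ENNReal.ofReal (w i) * b n := by rw [Finset.sum_mul]
        _ ≤ ∑ i ∈ t, ENNReal.ofReal (w i) * I (kk i) := by
            refine Finset.sum_le_sum fun i hi => ?_
            exact mul_le_mul_right (iInf₂_le (kk i) (hkk i hi).1) _
        _ = ∑ i ∈ t, ENNReal.ofReal (w i)
              * ∫⁻ ω in A, ENNReal.ofReal (min (f (kk i) ω) (M : ℝ)) ∂P := rfl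
        _ = ∑ i ∈ t, ∫⁻ ω in A, ENNReal.ofReal (w i)
              * ENNReal.ofReal (min (f (kk i) ω) (M : ℝ)) ∂P := by
            refine Finset.sum_congr rfl fun i hi => ?_
            rw [lintegral_const_mul _ (((hfmeas _).min measurable_const).ennreal_ofReal)]
        _ = ∫⁻ ω in A, ∑ i ∈ t, ENNReal.ofReal (w i)
              * ENNReal.ofReal (min (f (kk i) ω) (M : ℝ)) ∂P := by
            rw [lintegral_finset_sum]
            intro i hi
            exact (((hfmeas _).min measurable_const).ennreal_ofReal).const_mul _
        _ ≤ J n := lintegral_mono_ae (ae_restrict_of_ae hpt)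
    -- J n tends to ∫ min(g, M)
    have hJlim : Tendsto J atTop (nhds (∫⁻ ω in A, min (g ω) (ENNReal.ofReal (M : ℝ)) ∂P)) := by
      -- measurability of h n
      have hhmeas : ∀ n, Measurable (h n) := by
        intro n
        have hmem := hFCC n
        rw [convexHull_eq] at hmem
        obtain ⟨ι, t, w, z, hw0, hw1, hz, hsum⟩ := hmem
        have hz' : ∀ i, ∃ k, i ∈ t → (n ≤ k ∧ z i = f k) := by
          intro i
          by_cases hi : i ∈ t
          · obtain ⟨k, hk1, hk2⟩ := hz i hi
            exact ⟨k, fun _ => ⟨hk1, hk2⟩⟩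
          · exact ⟨0, fun hh => absurd hh hi⟩
        choose kk hkk using hz'
        have hrep : h n = fun ω => ∑ i ∈ t, w i * f (kk i) ω := by
          funext ω
          have := congrFun ((t.centerMass_eq_of_sum_1 z hw1).symm.trans hsum) ω
          rw [← this, Finset.sum_apply]
          refine Finset.sum_congr rfl fun i hi => ?_
          rw [(hkk i hi).2]
          rfl
        rw [hrep]
        exact Finset.measurable_sum t fun i _ => (hfmeas (kk i)).const_mul _
      apply tendsto_lintegral_of_dominated_convergence (fun _ => ENNReal.ofReal (M : ℝ))
      · intro n
        exact ((hhmeas n).min measurable_const).ennreal_ofReal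
      · intro n
        filter_upwards with ω
        exact ENNReal.ofReal_le_ofReal (min_le_right _ _)
      · rw [lintegral_const]
        exact ENNReal.mul_ne_top ENNReal.ofReal_ne_top (measure_ne_top _ _)
      · filter_upwards [ae_restrict_of_ae hae] with ω hω
        have : Tendsto (fun n => min (ENNReal.ofReal (h n ω)) (ENNReal.ofReal (M : ℝ)))
            atTop (nhds (min (g ω) (ENNReal.ofReal (M : ℝ)))) :=
          hω.min tendsto_const_nhds
        simpa only [hofmin] using this
    -- conclude: L ≤ lim J
    rw [← hbL]
    refine iSup_le fun m => ?_
    refine ge_of_tendsto hJlim ?_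
    filter_upwards [eventually_ge_atTop m] with n hn
    exact (hbmono hn).trans (hbJ n)
  -- from set integral inequalities to a.e. inequality
  have haeM : ∀ᵐ ω ∂P, ∀ M : ℕ,
      min (ENNReal.ofReal (flim ω)) (ENNReal.ofReal (M : ℝ)) ≤ min (g ω) (ENNReal.ofReal (M : ℝ)) := by
    rw [ae_all_iff]
    intro M
    apply ae_le_of_forall_setLIntegral_le_of_sigmaFinite
    · exact (hflimmeas.ennreal_ofReal).min measurable_const
    · intro s hs _
      have := key M s hs
      calc ∫⁻ ω in s, min (ENNReal.ofReal (flim ω)) (ENNReal.ofReal (M : ℝ)) ∂P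
          = ∫⁻ ω in s, ENNReal.ofReal (min (flim ω) (M : ℝ)) ∂P := by
            simp only [hofmin]
        _ ≤ ∫⁻ ω in s, min (g ω) (ENNReal.ofReal (M : ℝ)) ∂P := this
  filter_upwards [haeM] with ω hω
  obtain ⟨M, hM⟩ := exists_nat_ge (flim ω)
  have h1 : ENNReal.ofReal (flim ω) ≤ ENNReal.ofReal (M : ℝ) := ENNReal.ofReal_le_ofReal hM
  have := hω M
  rw [min_eq_left h1] at this
  exact this.trans (min_le_left _ _)
end

section
/- Let (Ω, 𝓕, P) be a probability space and (f_n)_{n∈ℕ} a sequence of nonnegative measurable functions with sup_{n∈ℕ} E_P[f_n] < ∞. Then the following are equivalent: (1) there exists a probability measure Q equivalent to P such that sup_{n∈ℕ} E_Q[f_n] < ∞ and lim_{n→∞} E_Q[f_n] = 0; (2) for every ε > 0 there exists a measurable set A_ε ∈ 𝓕 with P(Ω \ A_ε) ≤ ε and lim_{n→∞} E_P[f_n · 1_{A_ε}] = 0. -/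
open MeasureTheory Filter Set

lemma stmt4_half_tsum : ∑' k : ℕ, ((2:ENNReal)⁻¹) ^ (k+1) = 1 := by
  rw [ENNReal.tsum_geometric_add_one, ENNReal.one_sub_inv_two]
  exact ENNReal.mul_inv_cancel (by norm_num) (by norm_num)

lemma stmt4_ofReal_half_pow (k : ℕ) :
    ENNReal.ofReal ((1/2 : ℝ) ^ (k+1)) = ((2:ENNReal)⁻¹) ^ (k+1) := by
  rw [ENNReal.ofReal_pow (by norm_num : (0:ℝ) ≤ 1/2)]
  congr 1
  rw [one_div, ENNReal.ofReal_inv_of_pos (by norm_num), ENNReal.ofReal_ofNat]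

theorem stmt4 {Ω : Type*} [MeasurableSpace Ω] (P : Measure Ω)
    [IsProbabilityMeasure P]
    (f : ℕ → Ω → ℝ)
    (hfmeas : ∀ n, Measurable (f n)) (hfnn : ∀ n, 0 ≤ᵐ[P] f n)
    (hsupP : (⨆ n, ∫⁻ ω, ENNReal.ofReal (f n ω) ∂P) < ⊤) :
    (∃ Q : Measure Ω, IsProbabilityMeasure Q ∧ P ≪ Q ∧ Q ≪ P ∧
        (⨆ n, ∫⁻ ω, ENNReal.ofReal (f n ω) ∂Q) < ⊤ ∧
        Tendsto (fun n => ∫⁻ ω, ENNReal.ofReal (f n ω) ∂Q) atTop (nhds 0)) ↔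
    (∀ ε : ℝ, 0 < ε → ∃ A : Set Ω, MeasurableSet A ∧ P Aᶜ ≤ ENNReal.ofReal ε ∧
        Tendsto (fun n => ∫⁻ ω in A, ENNReal.ofReal (f n ω) ∂P) atTop (nhds 0)) := by
  set F : ℕ → Ω → ENNReal := fun n ω => ENNReal.ofReal (f n ω) with hFdef
  have hFmeas : ∀ n, Measurable (F n) := fun n => (hfmeas n).ennreal_ofReal
  set M : ENNReal := ⨆ n, ∫⁻ ω, F n ω ∂P with hMdef
  have hM : ∀ n, ∫⁻ ω, F n ω ∂P ≤ M := fun n => le_iSup (fun n => ∫⁻ ω, F n ω ∂P) n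
  constructor
  · rintro ⟨Q, hQprob, hPQ, hQP, -, hQtend⟩ ε hε
    set g : Ω → ENNReal := Q.rnDeriv P with hgdef
    have hgmeas : Measurable g := Measure.measurable_rnDeriv Q P
    have hQd : P.withDensity g = Q := Measure.withDensity_rnDeriv_eq Q P hQP
    -- the set where g vanishes is P-null
    have hg0 : P (g ⁻¹' {0}) = 0 := by
      apply hPQ
      have hms : MeasurableSet (g ⁻¹' {0}) := hgmeas (measurableSet_singleton 0)
      have : Q (g ⁻¹' {0}) = ∫⁻ ω in g ⁻¹' {0}, g ω ∂P := by
        rw [← hQd, withDensity_apply _ hms]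
      rw [this]
      have hzero : ∫⁻ ω in g ⁻¹' {0}, g ω ∂P = ∫⁻ _ in g ⁻¹' {0}, (0:ENNReal) ∂P := by
        refine setLIntegral_congr_fun hms (fun ω hω => hω)
      rw [hzero, lintegral_zero]
    -- choose m with P {g < 1/(m+1)} small
    set B : ℕ → Set Ω := fun m => {ω | g ω < ((m:ENNReal)+1)⁻¹} with hBdef
    have hBmeas : ∀ m, MeasurableSet (B m) := fun m => hgmeas measurableSet_Iio
    have hBanti : Antitone B := by
      intro m m' h ω hω
      exact lt_of_lt_of_le hω (ENNReal.inv_le_inv.mpr (by exact_mod_cast add_le_add_left (Nat.cast_le.mpr h) 1))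
    have hBsub : (⋂ m, B m) ⊆ g ⁻¹' {0} := by
      intro ω hω
      simp only [mem_iInter, hBdef, mem_setOf_eq] at hω
      by_contra h0
      obtain ⟨m, hm⟩ := ENNReal.exists_inv_nat_lt (h0 : g ω ≠ 0)
      have h1 : ((m:ENNReal)+1)⁻¹ ≤ ((m:ENNReal))⁻¹ :=
        ENNReal.inv_le_inv.mpr (le_add_of_nonneg_right zero_le_one)
      exact absurd (hω m) (not_lt.mpr (le_of_lt (lt_of_le_of_lt h1 hm)))
    have hBtend : Tendsto (fun m => P (B m)) atTop (nhds 0) := by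
      have h := tendsto_measure_iInter_atTop (μ := P)
        (fun m => (hBmeas m).nullMeasurableSet) hBanti ⟨0, measure_ne_top P _⟩
      have h0 : P (⋂ m, B m) = 0 :=
        le_antisymm (le_trans (measure_mono hBsub) hg0.le) (zero_le)
      rw [h0] at h
      exact h
    have hev : ∀ᶠ m in atTop, P (B m) < ENNReal.ofReal ε :=
      hBtend.eventually_lt_const (ENNReal.ofReal_pos.mpr hε)
    obtain ⟨m, hm⟩ := hev.exists
    refine ⟨(B m)ᶜ, (hBmeas m).compl, by rw [compl_compl]; exact hm.le, ?_⟩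
    -- on (B m)ᶜ, g ≥ 1/(m+1)
    have hbound : ∀ n, ∫⁻ ω in (B m)ᶜ, F n ω ∂P ≤ ((m:ENNReal)+1) * ∫⁻ ω, F n ω ∂Q := by
      intro n
      have hstep : ∫⁻ ω in (B m)ᶜ, F n ω ∂P
          ≤ ∫⁻ ω in (B m)ᶜ, ((m:ENNReal)+1) * g ω * F n ω ∂P := by
        refine setLIntegral_mono (by fun_prop) ?_
        intro ω hω
        have hg : ((m:ENNReal)+1)⁻¹ ≤ g ω := not_lt.mp hω
        have h1 : (1:ENNReal) ≤ ((m:ENNReal)+1) * g ω := by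
          calc (1:ENNReal) = ((m:ENNReal)+1) * ((m:ENNReal)+1)⁻¹ :=
                (ENNReal.mul_inv_cancel (by simp) (by simp)).symm
            _ ≤ ((m:ENNReal)+1) * g ω := mul_le_mul_right hg _
        calc F n ω = 1 * F n ω := (one_mul _).symm
          _ ≤ ((m:ENNReal)+1) * g ω * F n ω := mul_le_mul_left h1 _
      refine hstep.trans ?_
      refine (setLIntegral_le_lintegral _ _).trans ?_
      have : ∫⁻ ω, ((m:ENNReal)+1) * g ω * F n ω ∂P
          = ((m:ENNReal)+1) * ∫⁻ ω, g ω * F n ω ∂P := by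
        simp_rw [mul_assoc]
        exact lintegral_const_mul _ (hgmeas.mul (hFmeas n))
      rw [this]
      refine mul_le_mul_right (le_of_eq ?_) _
      rw [← hQd, lintegral_withDensity_eq_lintegral_mul _ hgmeas (hFmeas n)]
      rfl
    have hub : Tendsto (fun n => ((m:ENNReal)+1) * ∫⁻ ω, F n ω ∂Q) atTop (nhds 0) := by
      have := ENNReal.Tendsto.const_mul (a := (m:ENNReal)+1) hQtend (Or.inr (by simp))
      rwa [mul_zero] at this
    exact tendsto_of_tendsto_of_tendsto_of_le_of_le tendsto_const_nhds hub
      (fun n => zero_le) hbound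
  · intro H
    have key : ∀ k : ℕ, ∃ A : Set Ω, MeasurableSet A ∧ P Aᶜ ≤ ((2:ENNReal)⁻¹) ^ (k+1) ∧
        Tendsto (fun n => ∫⁻ ω in A, F n ω ∂P) atTop (nhds 0) := by
      intro k
      obtain ⟨A, h1, h2, h3⟩ := H ((1/2 : ℝ) ^ (k+1)) (by positivity)
      exact ⟨A, h1, (stmt4_ofReal_half_pow k) ▸ h2, h3⟩
    choose A hA hAc hAt using key
    set g : Ω → ENNReal :=
      fun ω => ∑' k, (A k).indicator (fun _ => ((2:ENNReal)⁻¹) ^ (k+1)) ω with hgdef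
    have hgmeas : Measurable g :=
      Measurable.ennreal_tsum fun k => measurable_const.indicator (hA k)
    have hgle : ∀ ω, g ω ≤ 1 := by
      intro ω
      calc g ω ≤ ∑' k, ((2:ENNReal)⁻¹) ^ (k+1) :=
            ENNReal.tsum_le_tsum fun k => indicator_le_self' (fun _ _ => zero_le) ω
        _ = 1 := stmt4_half_tsum
    set c : ENNReal := ∫⁻ ω, g ω ∂P with hcdef
    have hc_eq : c = ∑' k, ((2:ENNReal)⁻¹) ^ (k+1) * P (A k) := by
      rw [hcdef, lintegral_tsum fun k => (measurable_const.indicator (hA k)).aemeasurable]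
      exact tsum_congr fun k => lintegral_indicator_const (hA k) _
    have hc_le : c ≤ 1 := by
      calc c ≤ ∫⁻ _, 1 ∂P := lintegral_mono hgle
        _ = 1 := by simp
    have hc_ne_top : c ≠ ⊤ := (lt_of_le_of_lt hc_le ENNReal.one_lt_top).ne
    have hc_ne_zero : c ≠ 0 := by
      have hA0 : (2:ENNReal)⁻¹ ≤ P (A 0) := by
        have h1 : P (A 0)ᶜ ≤ (2:ENNReal)⁻¹ := by simpa using hAc 0
        have h3 : (1:ENNReal) ≤ P (A 0) + (2:ENNReal)⁻¹ := by
          calc (1:ENNReal) = P (A 0) + P (A 0)ᶜ := by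
                rw [measure_add_measure_compl (hA 0), measure_univ]
            _ ≤ P (A 0) + (2:ENNReal)⁻¹ := add_le_add_right h1 _
        calc (2:ENNReal)⁻¹ = 1 - (2:ENNReal)⁻¹ := ENNReal.one_sub_inv_two.symm
          _ ≤ P (A 0) := tsub_le_iff_right.mpr h3
      have : ((2:ENNReal)⁻¹) ^ 1 * P (A 0) ≤ c := hc_eq ▸ ENNReal.le_tsum 0
      intro h0
      rw [h0] at this
      simp only [pow_one, nonpos_iff_eq_zero, mul_eq_zero] at this
      rcases this with h | h
      · exact absurd h (by norm_num)
      · rw [h] at hA0; simpa using hA0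
    set Q : Measure Ω := P.withDensity (fun ω => c⁻¹ * g ω) with hQdef
    have hdmeas : Measurable (fun ω => c⁻¹ * g ω) := measurable_const.mul hgmeas
    have hQuniv : Q univ = 1 := by
      rw [hQdef, withDensity_apply _ MeasurableSet.univ, Measure.restrict_univ,
        lintegral_const_mul _ hgmeas, ← hcdef]
      exact ENNReal.inv_mul_cancel hc_ne_zero hc_ne_top
    have hgpos : ∀ᵐ ω ∂P, g ω ≠ 0 := by
      have hsub : {ω | g ω = 0} ⊆ ⋂ k, (A k)ᶜ := by
        intro ω hω
        simp only [mem_iInter, mem_compl_iff]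
        intro k hk
        have : ((2:ENNReal)⁻¹) ^ (k+1) ≤ g ω := by
          calc ((2:ENNReal)⁻¹) ^ (k+1)
              = (A k).indicator (fun _ => ((2:ENNReal)⁻¹) ^ (k+1)) ω := by
                rw [indicator_of_mem hk]
            _ ≤ g ω := ENNReal.le_tsum k
        rw [mem_setOf_eq.mp hω] at this
        exact absurd this (by simp)
      have h0 : P (⋂ k, (A k)ᶜ) = 0 := by
        have hb : ∀ k : ℕ, P (⋂ j, (A j)ᶜ) ≤ ((2:ENNReal)⁻¹) ^ (k+1) :=
          fun k => (measure_mono (iInter_subset _ k)).trans (hAc k)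
        have hpow : Tendsto (fun k : ℕ => ((2:ENNReal)⁻¹) ^ (k+1)) atTop (nhds 0) :=
          (ENNReal.tendsto_pow_atTop_nhds_zero_of_lt_one
            (by simp [ENNReal.inv_lt_one] : (2:ENNReal)⁻¹ < 1)).comp (tendsto_add_atTop_nat 1)
        exact le_antisymm (le_of_tendsto_of_tendsto' tendsto_const_nhds hpow hb) (zero_le)
      rw [ae_iff]
      simp only [ne_eq, not_not]
      exact measure_mono_null hsub h0
    have hPQ : P ≪ Q := by
      refine withDensity_absolutelyContinuous' hdmeas.aemeasurable ?_
      filter_upwards [hgpos] with ω hω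
      exact mul_ne_zero (ENNReal.inv_ne_zero.mpr hc_ne_top) hω
    -- integral identity
    have hQint : ∀ n, ∫⁻ ω, F n ω ∂Q
        = c⁻¹ * ∑' k, ((2:ENNReal)⁻¹) ^ (k+1) * ∫⁻ ω in A k, F n ω ∂P := by
      intro n
      rw [hQdef, lintegral_withDensity_eq_lintegral_mul _ hdmeas (hFmeas n)]
      have h1 : ∀ ω, ((fun ω => c⁻¹ * g ω) * F n) ω = c⁻¹ * (g ω * F n ω) := by
        intro ω; simp [mul_assoc]
      simp_rw [h1]
      rw [lintegral_const_mul (f := fun ω => g ω * F n ω) _ (hgmeas.mul (hFmeas n))]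
      congr 1
      have h2 : ∀ ω, g ω * F n ω
          = ∑' k, (A k).indicator (fun ω => ((2:ENNReal)⁻¹) ^ (k+1) * F n ω) ω := by
        intro ω
        simp only [hgdef]
        rw [← ENNReal.tsum_mul_right]
        refine tsum_congr fun k => ?_
        by_cases hk : ω ∈ A k <;> simp [indicator_of_mem, indicator_of_notMem, hk]
      simp_rw [h2]
      rw [lintegral_tsum (f := fun k ω => (A k).indicator (fun ω => ((2:ENNReal)⁻¹) ^ (k+1) * F n ω) ω) fun k =>
        (measurable_const.mul (hFmeas n)).indicator (hA k) |>.aemeasurable]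
      refine tsum_congr fun k => ?_
      rw [lintegral_indicator (hA k)]
      exact lintegral_const_mul _ (hFmeas n)
    set S : ℕ → ℕ → ENNReal := fun n k => ∫⁻ ω in A k, F n ω ∂P with hSdef
    have hS_le : ∀ n k, S n k ≤ M := fun n k =>
      (setLIntegral_le_lintegral _ _).trans (hM n)
    set T : ℕ → ENNReal := fun n => ∑' k, ((2:ENNReal)⁻¹) ^ (k+1) * S n k with hTdef
    have hT_le : ∀ n, T n ≤ M := by
      intro n
      calc T n ≤ ∑' k, ((2:ENNReal)⁻¹) ^ (k+1) * M :=
            ENNReal.tsum_le_tsum fun k => mul_le_mul_right (hS_le n k) _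
        _ = (∑' k, ((2:ENNReal)⁻¹) ^ (k+1)) * M := ENNReal.tsum_mul_right
        _ = M := by rw [stmt4_half_tsum, one_mul]
    have hTtend : Tendsto T atTop (nhds 0) := by
      have hdct := tendsto_lintegral_of_dominated_convergence
        (μ := Measure.count (α := ℕ))
        (F := fun n k => ((2:ENNReal)⁻¹) ^ (k+1) * S n k)
        (f := fun _ => 0)
        (bound := fun k => ((2:ENNReal)⁻¹) ^ (k+1) * M)
        (fun n => measurable_of_countable _)
        (fun n => ae_of_all _ fun k => mul_le_mul_right (hS_le n k) _)
        (by
          rw [lintegral_count, ENNReal.tsum_mul_right, stmt4_half_tsum, one_mul]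
          exact hsupP.ne)
        (ae_of_all _ fun k => by
          have := ENNReal.Tendsto.const_mul (a := ((2:ENNReal)⁻¹) ^ (k+1)) (hAt k)
            (Or.inr (ENNReal.pow_ne_top (ENNReal.inv_ne_top.mpr (by norm_num))))
          rwa [mul_zero] at this)
      simp_rw [lintegral_count, tsum_zero] at hdct
      exact hdct
    refine ⟨Q, ⟨hQuniv⟩, hPQ, withDensity_absolutelyContinuous _ _, ?_, ?_⟩
    · refine lt_of_le_of_lt (iSup_le fun n => ?_)
        (ENNReal.mul_lt_top (ENNReal.inv_lt_top.mpr (pos_iff_ne_zero.mpr hc_ne_zero)) hsupP)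
      rw [hQint n]
      exact mul_le_mul_right (hT_le n) _
    · have := ENNReal.Tendsto.const_mul (a := c⁻¹) hTtend
        (Or.inr (ENNReal.inv_ne_top.mpr hc_ne_zero))
      rw [mul_zero] at this
      refine Tendsto.congr (fun n => (hQint n).symm) ?_
      exact this
end

section
/- Let (Ω, 𝓕, P) be a probability space, (f_n)_{n∈ℕ} a sequence of nonnegative a.e.-finite measurable functions, and f a nonnegative a.e.-finite measurable function. Then the following are equivalent: (i) every sequence of forward convex combinations of (f_n) converges to f in probability; (ii) every sequence of forward convex combinations of the sequence (|f_n − f|)_{n∈ℕ} converges to 0 in probability. -/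
open MeasureTheory Filter Set
open scoped Topology

private lemma repr_of_mem {Ω : Type*} (f : ℕ → Ω → ℝ) {x : Ω → ℝ} {n : ℕ}
    (hx : x ∈ convexHull ℝ {g : Ω → ℝ | ∃ k, n ≤ k ∧ g = f k}) :
    ∃ (ι : Type) (t : Finset ι) (w : ι → ℝ) (k : ι → ℕ),
      (∀ i ∈ t, 0 ≤ w i) ∧ (∑ i ∈ t, w i) = 1 ∧ (∀ i ∈ t, n ≤ k i) ∧
      ∀ ω, x ω = ∑ i ∈ t, w i * f (k i) ω := by
  rw [convexHull_eq] at hx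
  obtain ⟨ι, t, w, z, hw0, hw1, hz, hx⟩ := hx
  classical
  have hk : ∀ i, ∃ m, (i ∈ t → (n ≤ m ∧ z i = f m)) := by
    intro i
    by_cases hi : i ∈ t
    · obtain ⟨m, hm1, hm2⟩ := hz i hi
      exact ⟨m, fun _ => ⟨hm1, hm2⟩⟩
    · exact ⟨n, fun h => absurd h hi⟩
  choose k hkk using hk
  refine ⟨ι, t, w, k, hw0, hw1, fun i hi => (hkk i hi).1, fun ω => ?_⟩
  rw [← hx, Finset.centerMass_eq_of_sum_1 _ _ hw1]
  rw [Finset.sum_apply]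
  refine Finset.sum_congr rfl fun i hi => ?_
  rw [Pi.smul_apply, smul_eq_mul, (hkk i hi).2]

private lemma mem_hull {Ω : Type*} (F : ℕ → Ω → ℝ) (n : ℕ) {ι : Type} (t : Finset ι)
    (w : ι → ℝ) (k : ι → ℕ) (hw0 : ∀ i ∈ t, 0 ≤ w i) (hw1 : ∑ i ∈ t, w i = 1)
    (hk : ∀ i ∈ t, n ≤ k i) :
    (fun ω => ∑ i ∈ t, w i * F (k i) ω) ∈ convexHull ℝ {g : Ω → ℝ | ∃ m, n ≤ m ∧ g = F m} := by
  have h := t.centerMass_mem_convexHull (w := w) (z := fun i => F (k i)) (s := {g : Ω → ℝ | ∃ m, n ≤ m ∧ g = F m}) hw0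
    (by rw [hw1]; norm_num) (fun i hi => ⟨k i, hk i hi, rfl⟩)
  rwa [Finset.centerMass_eq_of_sum_1 _ _ hw1, show (∑ i ∈ t, w i • F (k i)) =
    (fun ω => ∑ i ∈ t, w i * F (k i) ω) from funext fun ω => by
      rw [Finset.sum_apply]; rfl] at h

private lemma tendsto_of_dominated_aux {Ω : Type*} [MeasurableSpace Ω] (P : Measure Ω)
    {h g : ℕ → Ω → ℝ} {l : Ω → ℝ}
    (hle : ∀ n ω, |h n ω - l ω| ≤ g n ω)
    (hg : TendstoInMeasure P g atTop (fun _ => (0 : ℝ))) :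
    TendstoInMeasure P h atTop l := by
  rw [tendstoInMeasure_iff_dist] at hg ⊢
  intro ε hε
  refine tendsto_of_tendsto_of_tendsto_of_le_of_le tendsto_const_nhds (hg ε hε)
    (fun n => zero_le) (fun n => measure_mono ?_)
  intro ω hω
  simp only [Set.mem_setOf_eq, Real.dist_eq] at *
  calc ε ≤ |h n ω - l ω| := hω
    _ ≤ g n ω := hle n ω
    _ ≤ |g n ω - 0| := by rw [sub_zero]; exact le_abs_self _

private lemma combine_aux {Ω : Type*} [MeasurableSpace Ω] (P : Measure Ω)
    {g h S : ℕ → Ω → ℝ} {flim : Ω → ℝ}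
    (heq : ∀ n ω, g n ω = (h n ω - flim ω) + 2 * S n ω)
    (hh : TendstoInMeasure P h atTop flim)
    (hS : TendstoInMeasure P S atTop (fun _ => (0 : ℝ))) :
    TendstoInMeasure P g atTop (fun _ => (0 : ℝ)) := by
  rw [tendstoInMeasure_iff_dist] at hh hS ⊢
  intro ε hε
  have h1 := hh (ε / 2) (by positivity)
  have h2 := hS (ε / 4) (by positivity)
  refine tendsto_of_tendsto_of_tendsto_of_le_of_le tendsto_const_nhds
    (by simpa using h1.add h2) (fun n => zero_le) (fun n => ?_)
  refine le_trans (measure_mono ?_) (measure_union_le _ _)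
  intro ω hω
  simp only [Set.mem_setOf_eq, Real.dist_eq, Set.mem_union, sub_zero] at *
  by_contra hcon
  push_neg at hcon
  obtain ⟨hc1, hc2⟩ := hcon
  have := heq n ω
  have h3 : |g n ω| ≤ |h n ω - flim ω| + 2 * |S n ω| := by
    rw [this]
    calc |(h n ω - flim ω) + 2 * S n ω| ≤ |h n ω - flim ω| + |2 * S n ω| := abs_add_le _ _
      _ = |h n ω - flim ω| + 2 * |S n ω| := by rw [abs_mul]; norm_num
  linarith

private lemma S_tendsto {Ω : Type*} [MeasurableSpace Ω] (P : Measure Ω) [IsProbabilityMeasure P]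
    (f : ℕ → Ω → ℝ) (flim : Ω → ℝ) (hfmeas : ∀ n, Measurable (f n)) (hfnn : ∀ n, 0 ≤ᵐ[P] f n)
    (hflimmeas : Measurable flim)
    (hf_tm : TendstoInMeasure P f atTop flim)
    {ι : ℕ → Type} (t : ∀ n, Finset (ι n)) (w : ∀ n, (ι n) → ℝ) (k : ∀ n, (ι n) → ℕ)
    (hw0 : ∀ n, ∀ i ∈ t n, 0 ≤ w n i) (hw1 : ∀ n, ∑ i ∈ t n, w n i = 1)
    (hk : ∀ n, ∀ i ∈ t n, n ≤ k n i) :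
    TendstoInMeasure P (fun n ω => ∑ i ∈ t n, w n i * max (flim ω - f (k n i) ω) 0) atTop
      (fun _ => (0 : ℝ)) := by
  classical
  rw [tendstoInMeasure_iff_dist] at hf_tm ⊢
  set u : ℕ → Ω → ℝ := fun j ω => max (flim ω - f j ω) 0 with hu_def
  have humeas : ∀ j, Measurable (u j) := fun j => (hflimmeas.sub (hfmeas j)).max measurable_const
  have hunn : ∀ j ω, 0 ≤ u j ω := fun j ω => le_max_right _ _
  have hu_tm : ∀ ε : ℝ, 0 < ε → Tendsto (fun j => P {ω | ε ≤ u j ω}) atTop (𝓝 0) := by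
    intro ε hε
    refine tendsto_of_tendsto_of_tendsto_of_le_of_le tendsto_const_nhds (hf_tm ε hε)
      (fun j => zero_le) (fun j => measure_mono ?_)
    intro ω hω
    simp only [Set.mem_setOf_eq, Real.dist_eq] at *
    calc ε ≤ u j ω := hω
      _ ≤ |flim ω - f j ω| := max_le (le_abs_self _) (abs_nonneg _)
      _ = |f j ω - flim ω| := abs_sub_comm _ _
  intro ε hε
  rw [ENNReal.tendsto_atTop_zero]
  intro δ hδ
  obtain ⟨r, hr, hrδ⟩ : ∃ r : ℝ, 0 < r ∧ ENNReal.ofReal r ≤ δ := by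
    rcases eq_or_ne δ ⊤ with hne | hne
    · exact ⟨1, one_pos, hne ▸ le_top⟩
    · exact ⟨δ.toReal, ENNReal.toReal_pos hδ.ne' hne, (ENNReal.ofReal_toReal hne).le⟩
  -- choose a bound M for flim outside a set of small measure
  obtain ⟨m, hm⟩ : ∃ m : ℕ, P {ω | (m : ℝ) < flim ω} ≤ ENNReal.ofReal (r / 2) := by
    have hmono : Antitone (fun m : ℕ => {ω | (m : ℝ) < flim ω}) := by
      intro a b hab ω hω
      simp only [Set.mem_setOf_eq] at *
      exact lt_of_le_of_lt (by exact_mod_cast hab) hω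
    have hiInter : (⋂ m : ℕ, {ω | (m : ℝ) < flim ω}) = ∅ := by
      ext ω
      simp only [Set.mem_iInter, Set.mem_setOf_eq, Set.mem_empty_iff_false, iff_false, not_forall,
        not_lt]
      obtain ⟨m, hm⟩ := exists_nat_gt (flim ω)
      exact ⟨m, hm.le⟩
    have htt := tendsto_measure_iInter_atTop
      (fun m : ℕ => (measurableSet_lt measurable_const hflimmeas).nullMeasurableSet)
      hmono ⟨0, measure_ne_top P _⟩
    rw [hiInter, measure_empty] at htt
    obtain ⟨N, hN⟩ := ENNReal.tendsto_atTop_zero.mp htt (ENNReal.ofReal (r / 2))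
      (ENNReal.ofReal_pos.mpr (by positivity))
    exact ⟨N, hN N le_rfl⟩
  set M : ℝ := max (m : ℝ) 1 with hM_def
  have hM1 : (1 : ℝ) ≤ M := le_max_right _ _
  have hM0 : (0 : ℝ) < M := lt_of_lt_of_le one_pos hM1
  set φ : ℕ → Ω → ℝ := fun j ω => min (u j ω) M with hφ_def
  have hφmeas : ∀ j, Measurable (φ j) := fun j => (humeas j).min measurable_const
  have hφnn : ∀ j ω, 0 ≤ φ j ω := fun j ω => le_min (hunn j ω) hM0.le
  have hφle : ∀ j ω, φ j ω ≤ M := fun j ω => min_le_right _ _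
  have hφint : ∀ j, Integrable (φ j) P := fun j =>
    (integrable_const M).mono' (hφmeas j).aestronglyMeasurable
      (ae_of_all _ fun ω => by
        rw [Real.norm_eq_abs, abs_of_nonneg (hφnn j ω)]; exact hφle j ω)
  -- integrals of φ j become small
  obtain ⟨N, hN⟩ : ∃ N, ∀ j ≥ N, ∫ ω, φ j ω ∂P ≤ ε * r / 2 := by
    have hε' : (0 : ℝ) < ε * r / 4 := by positivity
    obtain ⟨N, hN⟩ := ENNReal.tendsto_atTop_zero.mp (hu_tm (ε * r / 4) hε')
      (ENNReal.ofReal (ε * r / (4 * M))) (ENNReal.ofReal_pos.mpr (by positivity))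
    refine ⟨N, fun j hj => ?_⟩
    have hAmeas : MeasurableSet {ω | ε * r / 4 ≤ u j ω} :=
      measurableSet_le measurable_const (humeas j)
    have hind : Integrable ({ω | ε * r / 4 ≤ u j ω}.indicator (fun _ => M)) P :=
      (integrable_const M).indicator hAmeas
    have step : ∫ ω, φ j ω ∂P ≤
        ∫ ω, (ε * r / 4 + {ω | ε * r / 4 ≤ u j ω}.indicator (fun _ => M) ω) ∂P := by
      refine integral_mono (hφint j) ((integrable_const _).add hind) ?_
      intro ω
      dsimp only
      by_cases hω : ω ∈ {ω | ε * r / 4 ≤ u j ω}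
      · rw [Set.indicator_of_mem hω]
        exact (hφle j ω).trans (le_add_of_nonneg_left hε'.le)
      · rw [Set.indicator_of_notMem hω]
        simp only [Set.mem_setOf_eq, not_le] at hω
        have hφu : φ j ω ≤ ε * r / 4 := le_trans (min_le_left _ _) hω.le
        linarith
    rw [integral_add (integrable_const _) hind, integral_const,
      integral_indicator_const _ hAmeas] at step
    have htr : (P {ω | ε * r / 4 ≤ u j ω}).toReal ≤ ε * r / (4 * M) :=
      ENNReal.toReal_le_of_le_ofReal (by positivity) (hN j hj)
    have : (P {ω | ε * r / 4 ≤ u j ω}).toReal * M ≤ ε * r / 4 := by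
      calc (P {ω | ε * r / 4 ≤ u j ω}).toReal * M ≤ (ε * r / (4 * M)) * M :=
            mul_le_mul_of_nonneg_right htr hM0.le
        _ = ε * r / 4 := by field_simp
    simp only [measureReal_def, measure_univ, ENNReal.toReal_one, one_smul, smul_eq_mul] at step
    linarith
  refine ⟨N, fun n hn => ?_⟩
  set T : Ω → ℝ := fun ω => ∑ i ∈ t n, w n i * φ (k n i) ω with hT_def
  have hTnn : ∀ ω, 0 ≤ T ω := fun ω =>
    Finset.sum_nonneg fun i hi => mul_nonneg (hw0 n i hi) (hφnn _ ω)
  have hTint : Integrable T P :=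
    integrable_finset_sum _ fun i hi => (hφint (k n i)).const_mul (w n i)
  -- Markov bound for T
  have hTmeas : P {ω | ε ≤ T ω} ≤ ENNReal.ofReal (r / 2) := by
    have hint : ∫ ω, T ω ∂P ≤ ε * r / 2 := by
      rw [hT_def]
      rw [integral_finset_sum _ fun i hi => (hφint (k n i)).const_mul (w n i)]
      calc ∑ i ∈ t n, ∫ ω, w n i * φ (k n i) ω ∂P
          = ∑ i ∈ t n, w n i * ∫ ω, φ (k n i) ω ∂P := by
            refine Finset.sum_congr rfl fun i hi => ?_
            exact integral_const_mul _ _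
        _ ≤ ∑ i ∈ t n, w n i * (ε * r / 2) := by
            refine Finset.sum_le_sum fun i hi => ?_
            exact mul_le_mul_of_nonneg_left (hN (k n i) (le_trans hn (hk n i hi))) (hw0 n i hi)
        _ = ε * r / 2 := by rw [← Finset.sum_mul, hw1 n, one_mul]
    have hmarkov := mul_meas_ge_le_integral_of_nonneg (ae_of_all _ hTnn) hTint ε
    have h1 : (P {ω | ε ≤ T ω}).toReal ≤ r / 2 := by
      have h2 := le_trans hmarkov hint
      have h3 : ε * (P {ω | ε ≤ T ω}).toReal ≤ ε * (r / 2) := by rw [measureReal_def] at h2; linarith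
      exact (mul_le_mul_iff_right₀ hε).mp h3
    calc P {ω | ε ≤ T ω} = ENNReal.ofReal ((P {ω | ε ≤ T ω}).toReal) :=
          (ENNReal.ofReal_toReal (measure_ne_top _ _)).symm
      _ ≤ ENNReal.ofReal (r / 2) := ENNReal.ofReal_le_ofReal h1
  -- a.e. inclusion
  have hae : ∀ᵐ ω ∂P, ∀ j, 0 ≤ f j ω := ae_all_iff.mpr hfnn
  have hsub : ∀ᵐ ω ∂P, ω ∈ {ω | ε ≤ dist (∑ i ∈ t n, w n i * max (flim ω - f (k n i) ω) 0) 0} →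
      ω ∈ ({ω | (m : ℝ) < flim ω} ∪ {ω | ε ≤ T ω} : Set Ω) := by
    filter_upwards [hae] with ω hω hmem
    simp only [Set.mem_setOf_eq, Real.dist_eq, sub_zero] at hmem
    rw [Set.mem_union]
    by_cases hflim : (m : ℝ) < flim ω
    · exact Or.inl hflim
    · right
      push_neg at hflim
      have hSnn : 0 ≤ ∑ i ∈ t n, w n i * max (flim ω - f (k n i) ω) 0 :=
        Finset.sum_nonneg fun i hi => mul_nonneg (hw0 n i hi) (le_max_right _ _)
      rw [abs_of_nonneg hSnn] at hmem
      have hTeq : T ω = ∑ i ∈ t n, w n i * max (flim ω - f (k n i) ω) 0 := by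
        refine Finset.sum_congr rfl fun i hi => ?_
        congr 1
        refine min_eq_left (max_le ?_ hM0.le)
        have := hω (k n i)
        calc flim ω - f (k n i) ω ≤ flim ω := by linarith
          _ ≤ (m : ℝ) := hflim
          _ ≤ M := le_max_left _ _
      show ε ≤ T ω
      rw [hTeq]
      exact hmem
  calc P {x | ε ≤ dist (∑ i ∈ t n, w n i * max (flim x - f (k n i) x) 0) ((fun _ => (0:ℝ)) x)}
      ≤ P ({ω | (m : ℝ) < flim ω} ∪ {ω | ε ≤ T ω}) := measure_mono_ae hsub
    _ ≤ P {ω | (m : ℝ) < flim ω} + P {ω | ε ≤ T ω} := measure_union_le _ _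
    _ ≤ ENNReal.ofReal (r / 2) + ENNReal.ofReal (r / 2) := add_le_add hm hTmeas
    _ = ENNReal.ofReal r := by
        rw [← ENNReal.ofReal_add (by positivity) (by positivity)]; norm_num
    _ ≤ δ := hrδ

theorem stmt5 {Ω : Type*} [MeasurableSpace Ω] (P : Measure Ω)
    [IsProbabilityMeasure P]
    (f : ℕ → Ω → ℝ) (flim : Ω → ℝ)
    (hfmeas : ∀ n, Measurable (f n)) (hfnn : ∀ n, 0 ≤ᵐ[P] f n)
    (hflimmeas : Measurable flim) (hflimnn : 0 ≤ᵐ[P] flim) :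
    (∀ h : ℕ → Ω → ℝ, FwdConvexCombos f h → TendstoInMeasure P h atTop flim) ↔
    (∀ h : ℕ → Ω → ℝ, FwdConvexCombos (fun n ω => |f n ω - flim ω|) h →
      TendstoInMeasure P h atTop (fun _ => (0 : ℝ))) := by
  constructor
  · intro hi g hg
    have hf_tm : TendstoInMeasure P f atTop flim :=
      hi f (fun n => subset_convexHull ℝ _ ⟨n, le_refl n, rfl⟩)
    choose ι t w k hw0 hw1 hk hrepr using fun n =>
      repr_of_mem (fun m ω => |f m ω - flim ω|) (hg n)
    have hh_mem : FwdConvexCombos f (fun n ω => ∑ i ∈ t n, w n i * f (k n i) ω) :=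
      fun n => mem_hull f n (t n) (w n) (k n) (hw0 n) (hw1 n) (hk n)
    have hh := hi _ hh_mem
    have hS := S_tendsto P f flim hfmeas hfnn hflimmeas hf_tm t w k hw0 hw1 hk
    refine combine_aux P (h := fun n ω => ∑ i ∈ t n, w n i * f (k n i) ω)
      (S := fun n ω => ∑ i ∈ t n, w n i * max (flim ω - f (k n i) ω) 0) ?_ hh hS
    intro n ω
    rw [hrepr n ω]
    have key : ∀ a b : ℝ, |a - b| = (a - b) + 2 * max (b - a) 0 := by
      intro a b
      rcases le_total b a with hab | hab
      · rw [max_eq_right (sub_nonpos.mpr hab), abs_of_nonneg (sub_nonneg.mpr hab)]; ring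
      · rw [max_eq_left (sub_nonneg.mpr hab), abs_of_nonpos (sub_nonpos.mpr hab)]; ring
    calc ∑ i ∈ t n, w n i * |f (k n i) ω - flim ω|
        = ∑ i ∈ t n, (w n i * (f (k n i) ω - flim ω)
            + 2 * (w n i * max (flim ω - f (k n i) ω) 0)) := by
          refine Finset.sum_congr rfl fun i hi => ?_
          rw [key]; ring
      _ = (∑ i ∈ t n, w n i * (f (k n i) ω - flim ω))
            + 2 * ∑ i ∈ t n, w n i * max (flim ω - f (k n i) ω) 0 := by
          rw [Finset.sum_add_distrib, Finset.mul_sum]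
      _ = ((∑ i ∈ t n, w n i * f (k n i) ω) - flim ω)
            + 2 * ∑ i ∈ t n, w n i * max (flim ω - f (k n i) ω) 0 := by
          congr 1
          simp only [mul_sub]
          rw [Finset.sum_sub_distrib, ← Finset.sum_mul, hw1 n, one_mul]
  · intro hii g hg
    choose ι t w k hw0 hw1 hk hrepr using fun n => repr_of_mem f (hg n)
    have habs_mem : FwdConvexCombos (fun m ω => |f m ω - flim ω|)
        (fun n ω => ∑ i ∈ t n, w n i * |f (k n i) ω - flim ω|) :=
      fun n => mem_hull (fun m ω => |f m ω - flim ω|) n (t n) (w n) (k n)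
        (hw0 n) (hw1 n) (hk n)
    have hgg := hii _ habs_mem
    refine tendsto_of_dominated_aux P ?_ hgg
    intro n ω
    rw [hrepr n ω]
    have hsplit : (∑ i ∈ t n, w n i * f (k n i) ω) - flim ω
        = ∑ i ∈ t n, w n i * (f (k n i) ω - flim ω) := by
      simp only [mul_sub]
      rw [Finset.sum_sub_distrib, ← Finset.sum_mul, hw1 n, one_mul]
    rw [hsplit]
    calc |∑ i ∈ t n, w n i * (f (k n i) ω - flim ω)|
        ≤ ∑ i ∈ t n, |w n i * (f (k n i) ω - flim ω)| := Finset.abs_sum_le_sum_abs _ _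
      _ = ∑ i ∈ t n, w n i * |f (k n i) ω - flim ω| :=
          Finset.sum_congr rfl fun i hi => by rw [abs_mul, abs_of_nonneg (hw0 n i hi)]
end

section
/- Let (Ω, 𝓕, Q) be a probability space, (f_n)_{n∈ℕ} a sequence of nonnegative measurable functions with sup_{n∈ℕ} E_Q[f_n] < ∞, and f a nonnegative measurable function with lim_{n→∞} E_Q[|f_n − f|] = 0. Let C' = { Σ_{n∈ℕ} α_n f_n + (1 − Σ_{n∈ℕ} α_n) f : α_n ≥ 0 for all n and Σ_{n∈ℕ} α_n ≤ 1 }, where the series is understood pointwise a.e. Then every C'-valued sequence (g_k)_{k∈ℕ} admits a subsequence that converges in L¹(Q) to an element of C'; i.e., C' is sequentially compact in L¹(Q). -/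
open MeasureTheory Filter Set
open scoped ENNReal NNReal

/-- `g` is a countable convex combination `Σₙ αₙ fₙ + (1 - Σₙ αₙ) flim`, the series
being understood as a pointwise a.e. limit. -/
def MemCountableConvex {Ω : Type*} [MeasurableSpace Ω] (μ : Measure Ω)
    (f : ℕ → Ω → ℝ) (flim : Ω → ℝ) (g : Ω → ℝ) : Prop :=
  ∃ α : ℕ → ℝ, (∀ n, 0 ≤ α n) ∧ Summable α ∧ (∑' n, α n) ≤ 1 ∧
    ∀ᵐ ω ∂μ, HasSum (fun n => α n * f n ω) (g ω - (1 - ∑' n, α n) * flim ω)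

lemma aux_ae_summable {Ω : Type*} [MeasurableSpace Ω] (Q : Measure Ω)
    (f : ℕ → Ω → ℝ) (hfmeas : ∀ n, Measurable (f n)) (hfnn : ∀ n, 0 ≤ᵐ[Q] f n)
    (β : ℕ → ℝ) (hβnn : ∀ n, 0 ≤ β n)
    (hfin : ∑' n, ENNReal.ofReal (β n) * ∫⁻ ω, ENNReal.ofReal (f n ω) ∂Q ≠ ⊤) :
    ∀ᵐ ω ∂Q, Summable (fun n => β n * f n ω) := by
  have hmeas : ∀ n, Measurable fun ω => ENNReal.ofReal (β n * f n ω) :=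
    fun n => (measurable_const.mul (hfmeas n)).ennreal_ofReal
  have hlint : ∫⁻ ω, ∑' n, ENNReal.ofReal (β n * f n ω) ∂Q ≠ ⊤ := by
    have heq : ∀ n, ∫⁻ ω, ENNReal.ofReal (β n * f n ω) ∂Q =
        ENNReal.ofReal (β n) * ∫⁻ ω, ENNReal.ofReal (f n ω) ∂Q := by
      intro n
      simp_rw [ENNReal.ofReal_mul (hβnn n)]
      exact lintegral_const_mul' _ _ ENNReal.ofReal_ne_top
    rw [lintegral_tsum fun n => (hmeas n).aemeasurable]
    simp_rw [heq]
    exact hfin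
  have hae := ae_lt_top (Measurable.ennreal_tsum hmeas) hlint
  filter_upwards [hae, ae_all_iff.mpr hfnn] with ω hω hnn
  have hnn' : ∀ i, (0:ℝ) ≤ f i ω := fun i => hnn i
  have h1 : (∑' n, ((β n * f n ω).toNNReal : ENNReal)) ≠ ⊤ := hω.ne
  have h2 := ENNReal.tsum_coe_ne_top_iff_summable.mp h1
  have h3 := NNReal.summable_coe.mpr h2
  exact h3.congr fun n => Real.coe_toNNReal _ (mul_nonneg (hβnn n) (hnn' n))

lemma aux_lintegral_bound {Ω : Type*} [MeasurableSpace Ω] (Q : Measure Ω)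
    (F : ℕ → Ω → ℝ) (hF : ∀ n, Measurable (F n)) (c : ℕ → ℝ) (h : Ω → ℝ)
    (hae : ∀ᵐ ω ∂Q, Summable (fun n => |c n| * |F n ω|) ∧
      HasSum (fun n => c n * F n ω) (h ω)) :
    ∫⁻ ω, ENNReal.ofReal |h ω| ∂Q ≤
      ∑' n, ENNReal.ofReal |c n| * ∫⁻ ω, ENNReal.ofReal |F n ω| ∂Q := by
  have step1 : ∫⁻ ω, ENNReal.ofReal |h ω| ∂Q ≤
      ∫⁻ ω, ∑' n, ENNReal.ofReal |c n| * ENNReal.ofReal |F n ω| ∂Q := by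
    apply lintegral_mono_ae
    filter_upwards [hae] with ω hω
    obtain ⟨hsum, hhs⟩ := hω
    have hsum' : Summable fun n => |c n * F n ω| := by
      simpa [abs_mul] using hsum
    have hsum'' : Summable fun n => ‖c n * F n ω‖ := by
      simpa only [Real.norm_eq_abs] using hsum'
    have habs : |h ω| ≤ ∑' n, |c n * F n ω| := by
      rw [← hhs.tsum_eq]
      have := norm_tsum_le_tsum_norm (f := fun n => c n * F n ω) hsum''
      simpa only [Real.norm_eq_abs] using this
    calc ENNReal.ofReal |h ω| ≤ ENNReal.ofReal (∑' n, |c n * F n ω|) :=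
          ENNReal.ofReal_le_ofReal habs
      _ = ∑' n, ENNReal.ofReal |c n * F n ω| :=
          ENNReal.ofReal_tsum_of_nonneg (fun n => abs_nonneg _) hsum'
      _ = ∑' n, ENNReal.ofReal |c n| * ENNReal.ofReal |F n ω| := by
          congr 1; funext n
          rw [abs_mul, ENNReal.ofReal_mul (abs_nonneg _)]
  refine step1.trans_eq ?_
  rw [lintegral_tsum fun n =>
    ((hF n).abs.ennreal_ofReal.const_mul _).aemeasurable]
  congr 1; funext n
  rw [lintegral_const_mul' _ _ ENNReal.ofReal_ne_top]

theorem stmt6 {Ω : Type*} [MeasurableSpace Ω] (Q : Measure Ω)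
    [IsProbabilityMeasure Q]
    (f : ℕ → Ω → ℝ) (flim : Ω → ℝ)
    (hfmeas : ∀ n, Measurable (f n)) (hfnn : ∀ n, 0 ≤ᵐ[Q] f n)
    (hflimmeas : Measurable flim) (hflimnn : 0 ≤ᵐ[Q] flim)
    (hsup : (⨆ n, ∫⁻ ω, ENNReal.ofReal (f n ω) ∂Q) < ⊤)
    (hL1 : Tendsto (fun n => ∫⁻ ω, ENNReal.ofReal |f n ω - flim ω| ∂Q) atTop (nhds 0))
    (g : ℕ → Ω → ℝ) (hg : ∀ k, MemCountableConvex Q f flim (g k)) :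
    ∃ φ : ℕ → ℕ, StrictMono φ ∧ ∃ glim : Ω → ℝ,
      MemCountableConvex Q f flim glim ∧
      Tendsto (fun k => ∫⁻ ω, ENNReal.ofReal |g (φ k) ω - glim ω| ∂Q) atTop (nhds 0) := by
  classical
  choose αs hαnn hαsum hαle hαHS using hg
  set M : ℝ≥0∞ := ⨆ n, ∫⁻ ω, ENNReal.ofReal (f n ω) ∂Q with hM
  set ε : ℕ → ℝ≥0∞ := fun n => ∫⁻ ω, ENNReal.ofReal |f n ω - flim ω| ∂Q with hε
  -- finiteness of ∫ flim
  obtain ⟨m, hm⟩ : ∃ m, ε m ≤ 1 := (ENNReal.tendsto_nhds_zero.mp hL1 1 zero_lt_one).exists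
  have hFfin : ∫⁻ ω, ENNReal.ofReal (flim ω) ∂Q ≠ ⊤ := by
    have hb : ∫⁻ ω, ENNReal.ofReal (flim ω) ∂Q ≤
        ∫⁻ ω, (ENNReal.ofReal |f m ω - flim ω| + ENNReal.ofReal (f m ω)) ∂Q := by
      apply lintegral_mono
      intro ω
      calc ENNReal.ofReal (flim ω) ≤ ENNReal.ofReal (|f m ω - flim ω| + f m ω) := by
            apply ENNReal.ofReal_le_ofReal
            have : flim ω - f m ω ≤ |f m ω - flim ω| := by
              rw [abs_sub_comm]; exact le_abs_self _
            linarith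
        _ ≤ _ := ENNReal.ofReal_add_le
    rw [lintegral_add_left (f := fun ω => ENNReal.ofReal |f m ω - flim ω|) ((hfmeas m).sub hflimmeas).abs.ennreal_ofReal] at hb
    refine (hb.trans_lt ?_).ne
    exact ENNReal.add_lt_top.mpr ⟨hm.trans_lt ENNReal.one_lt_top,
      (le_iSup (fun n => ∫⁻ ω, ENNReal.ofReal (f n ω) ∂Q) m).trans_lt hsup⟩
  have hεfin : ∀ n, ε n ≠ ⊤ := by
    intro n
    have hb : ε n ≤ ∫⁻ ω, (ENNReal.ofReal (f n ω) + ENNReal.ofReal (flim ω)) ∂Q := by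
      apply lintegral_mono_ae
      filter_upwards [hfnn n, hflimnn] with ω h1 h2
      calc ENNReal.ofReal |f n ω - flim ω| ≤ ENNReal.ofReal (f n ω + flim ω) := by
            apply ENNReal.ofReal_le_ofReal
            have := abs_sub (f n ω) (flim ω)
            rwa [abs_of_nonneg h1, abs_of_nonneg h2] at this
        _ ≤ _ := ENNReal.ofReal_add_le
    rw [lintegral_add_left (hfmeas n).ennreal_ofReal] at hb
    refine (hb.trans_lt ?_).ne
    exact ENNReal.add_lt_top.mpr ⟨(le_iSup (fun n => ∫⁻ ω, ENNReal.ofReal (f n ω) ∂Q) n).trans_lt hsup,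
      lt_top_iff_ne_top.mpr hFfin⟩
  -- extract a convergent subsequence of coefficients
  have hmem : ∀ k, αs k ∈ Set.pi univ (fun _ : ℕ => Icc (0:ℝ) 1) := by
    intro k n _
    exact ⟨hαnn k n, (Summable.le_tsum (hαsum k) n fun m _ => hαnn k m).trans (hαle k)⟩
  obtain ⟨β, hβmem, φ, hφ, hconv⟩ :=
    (isCompact_univ_pi fun _ : ℕ => isCompact_Icc).tendsto_subseq hmem
  have hβconv : ∀ n, Tendsto (fun k => αs (φ k) n) atTop (nhds (β n)) := by
    intro n
    exact tendsto_pi_nhds.mp hconv n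
  have hβnn : ∀ n, 0 ≤ β n := fun n => (hβmem n (mem_univ n)).1
  have hsumle : ∀ N k, ∑ i ∈ Finset.range N, αs k i ≤ 1 := fun N k =>
    (Summable.sum_le_tsum (Finset.range N) (fun m _ => hαnn k m) (hαsum k)).trans (hαle k)
  have hβrange : ∀ N, ∑ i ∈ Finset.range N, β i ≤ 1 := by
    intro N
    have : Tendsto (fun k => ∑ i ∈ Finset.range N, αs (φ k) i) atTop
        (nhds (∑ i ∈ Finset.range N, β i)) :=
      tendsto_finset_sum _ fun n _ => hβconv n
    exact le_of_tendsto this (Eventually.of_forall fun k => hsumle N (φ k))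
  have hβsum : Summable β := summable_of_sum_range_le hβnn hβrange
  have hβle : (∑' n, β n) ≤ 1 := Summable.tsum_le_of_sum_range_le hβsum hβrange
  -- a.e. summability of the limiting combination
  have hβae : ∀ᵐ ω ∂Q, Summable (fun n => β n * f n ω) := by
    apply aux_ae_summable Q f hfmeas hfnn β hβnn
    have : ∑' n, ENNReal.ofReal (β n) * ∫⁻ ω, ENNReal.ofReal (f n ω) ∂Q ≤
        ∑' n, ENNReal.ofReal (β n) * M := by
      exact Summable.tsum_le_tsum (fun n => mul_le_mul_right
        (hM ▸ le_iSup (fun n => ∫⁻ ω, ENNReal.ofReal (f n ω) ∂Q) n) _)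
        ENNReal.summable ENNReal.summable
    rw [ENNReal.tsum_mul_right, ← ENNReal.ofReal_tsum_of_nonneg hβnn hβsum] at this
    refine (this.trans_lt ?_).ne
    calc ENNReal.ofReal (∑' n, β n) * M ≤ 1 * M :=
          mul_le_mul_left (by simpa using ENNReal.ofReal_le_ofReal hβle) _
      _ < ⊤ := by simpa using hsup
  set glim : Ω → ℝ := fun ω => (∑' n, β n * f n ω) + (1 - ∑' n, β n) * flim ω with hglim
  refine ⟨φ, hφ, glim, ⟨β, hβnn, hβsum, hβle, ?_⟩, ?_⟩
  · filter_upwards [hβae] with ω hω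
    have : glim ω - (1 - ∑' n, β n) * flim ω = ∑' n, β n * f n ω := by
      rw [hglim]; ring
    rw [this]
    exact hω.hasSum
  -- the convergence
  · -- difference representation for each k
    have hdiff : ∀ k, ∀ᵐ ω ∂Q,
        Summable (fun n => |αs (φ k) n - β n| * |f n ω - flim ω|) ∧
        HasSum (fun n => (αs (φ k) n - β n) * (f n ω - flim ω)) (g (φ k) ω - glim ω) := by
      intro k
      filter_upwards [hβae, hαHS (φ k), ae_all_iff.mpr hfnn, hflimnn] with ω hβω h1 hnn hfl
      have hαω : Summable (fun n => αs (φ k) n * f n ω) := h1.summable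
      constructor
      · apply Summable.of_nonneg_of_le
          (fun n => mul_nonneg (abs_nonneg _) (abs_nonneg _))
          (fun n => ?_)
          (((hαω.add hβω).add
            (((hαsum (φ k)).add hβsum).mul_right (flim ω))))
        have h2 : |αs (φ k) n - β n| ≤ αs (φ k) n + β n := by
          have := abs_sub (αs (φ k) n) (β n)
          rwa [abs_of_nonneg (hαnn (φ k) n), abs_of_nonneg (hβnn n)] at this
        have h3 : |f n ω - flim ω| ≤ f n ω + flim ω := by
          have := abs_sub (f n ω) (flim ω)
          rwa [abs_of_nonneg (hnn n), abs_of_nonneg hfl] at this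
        calc |αs (φ k) n - β n| * |f n ω - flim ω|
            ≤ (αs (φ k) n + β n) * (f n ω + flim ω) :=
              mul_le_mul h2 h3 (abs_nonneg _) (add_nonneg (hαnn _ n) (hβnn n))
          _ = (αs (φ k) n * f n ω + β n * f n ω) + (αs (φ k) n + β n) * flim ω := by ring
      · have h2 : HasSum (fun n => β n * f n ω) (∑' n, β n * f n ω) := hβω.hasSum
        have h3 : HasSum (fun n => (αs (φ k) n - β n) * flim ω)
            (((∑' n, αs (φ k) n) - ∑' n, β n) * flim ω) :=
          ((hαsum (φ k)).hasSum.sub hβsum.hasSum).mul_right _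
        have h4 := (h1.sub h2).sub h3
        convert h4 using 1
        · rfl
        · funext n; ring
        · rw [hglim]; ring
    have hbound : ∀ k, ∫⁻ ω, ENNReal.ofReal |g (φ k) ω - glim ω| ∂Q ≤
        ∑' n, ENNReal.ofReal |αs (φ k) n - β n| * ε n := by
      intro k
      exact aux_lintegral_bound Q (fun n ω => f n ω - flim ω)
        (fun n => (hfmeas n).sub hflimmeas) _ _ (hdiff k)
    -- each coefficient sum is at most 2
    have hcsum : ∀ k, ∑' n, ENNReal.ofReal |αs (φ k) n - β n| ≤ 2 := by
      intro k
      have h1 : ∀ n, ENNReal.ofReal |αs (φ k) n - β n| ≤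
          ENNReal.ofReal (αs (φ k) n) + ENNReal.ofReal (β n) := by
        intro n
        refine le_trans (ENNReal.ofReal_le_ofReal ?_) ENNReal.ofReal_add_le
        have := abs_sub (αs (φ k) n) (β n)
        rwa [abs_of_nonneg (hαnn (φ k) n), abs_of_nonneg (hβnn n)] at this
      calc ∑' n, ENNReal.ofReal |αs (φ k) n - β n|
          ≤ ∑' n, (ENNReal.ofReal (αs (φ k) n) + ENNReal.ofReal (β n)) :=
            Summable.tsum_le_tsum h1 ENNReal.summable ENNReal.summable
        _ = (∑' n, ENNReal.ofReal (αs (φ k) n)) + ∑' n, ENNReal.ofReal (β n) :=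
            ENNReal.tsum_add
        _ ≤ 1 + 1 := by
            apply add_le_add
            · rw [← ENNReal.ofReal_tsum_of_nonneg (hαnn (φ k)) (hαsum (φ k))]
              simpa using ENNReal.ofReal_le_ofReal (hαle (φ k))
            · rw [← ENNReal.ofReal_tsum_of_nonneg hβnn hβsum]
              simpa using ENNReal.ofReal_le_ofReal hβle
        _ = 2 := one_add_one_eq_two
    -- main convergence
    rw [ENNReal.tendsto_nhds_zero]
    intro e he
    set δ : ℝ≥0∞ := e / 2 with hδdef
    have hδpos : δ ≠ 0 := (ENNReal.half_pos he.ne').ne'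
    set η : ℝ≥0∞ := δ / 2 / 2 with hηdef
    have hηpos : 0 < η := ENNReal.half_pos (ENNReal.half_pos hδpos).ne'
    obtain ⟨N, hN⟩ := (ENNReal.tendsto_nhds_zero.mp hL1 η hηpos).exists_forall_of_atTop
    -- tail estimate
    have htail : ∀ k, ∑' n : ↑((Finset.range N : Set ℕ))ᶜ,
        ENNReal.ofReal |αs (φ k) n - β n| * ε n ≤ δ / 2 := by
      intro k
      have h1 : ∀ n : ↑((Finset.range N : Set ℕ))ᶜ,
          ENNReal.ofReal |αs (φ k) (n : ℕ) - β (n : ℕ)| * ε (n : ℕ) ≤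
          ENNReal.ofReal |αs (φ k) (n : ℕ) - β (n : ℕ)| * η := by
        rintro ⟨n, hn⟩
        apply mul_le_mul_right
        apply hN
        simpa using hn
      calc ∑' n : ↑((Finset.range N : Set ℕ))ᶜ,
            ENNReal.ofReal |αs (φ k) (n : ℕ) - β (n : ℕ)| * ε (n : ℕ)
          ≤ ∑' n : ↑((Finset.range N : Set ℕ))ᶜ,
            ENNReal.ofReal |αs (φ k) (n : ℕ) - β (n : ℕ)| * η :=
            Summable.tsum_le_tsum h1 ENNReal.summable ENNReal.summable
        _ = (∑' n : ↑((Finset.range N : Set ℕ))ᶜ,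
            ENNReal.ofReal |αs (φ k) (n : ℕ) - β (n : ℕ)|) * η := ENNReal.tsum_mul_right
        _ ≤ (∑' n, ENNReal.ofReal |αs (φ k) n - β n|) * η := by
            apply mul_le_mul_left
            exact Summable.tsum_le_tsum_of_inj (↑) Subtype.val_injective (fun _ _ => zero_le)
              (fun _ => le_rfl) ENNReal.summable ENNReal.summable
        _ ≤ 2 * η := mul_le_mul_left (hcsum k) _
        _ = δ / 2 := by rw [hηdef, ENNReal.mul_div_cancel two_ne_zero ENNReal.ofNat_ne_top]
    -- head estimate
    have hhead : Tendsto (fun k => ∑ n ∈ Finset.range N,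
        ENNReal.ofReal |αs (φ k) n - β n| * ε n) atTop (nhds 0) := by
      have : ∀ n ∈ Finset.range N, Tendsto
          (fun k => ENNReal.ofReal |αs (φ k) n - β n| * ε n) atTop (nhds 0) := by
        intro n _
        have h1 : Tendsto (fun k => |αs (φ k) n - β n|) atTop (nhds 0) := by
          have := (hβconv n).sub_const (β n)
          rw [sub_self] at this
          simpa using this.abs
        have h2 : Tendsto (fun k => ENNReal.ofReal |αs (φ k) n - β n|) atTop (nhds 0) := by
          have h := (ENNReal.continuous_ofReal.tendsto 0).comp h1
          rw [ENNReal.ofReal_zero] at h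
          exact h
        have h3 := ENNReal.Tendsto.mul_const h2 (Or.inr (hεfin n))
        simpa using h3
      have := tendsto_finset_sum (Finset.range N) this
      simpa using this
    have hheadev : ∀ᶠ k in atTop, ∑ n ∈ Finset.range N,
        ENNReal.ofReal |αs (φ k) n - β n| * ε n ≤ δ / 2 :=
      ENNReal.tendsto_nhds_zero.mp hhead (δ / 2) (ENNReal.half_pos hδpos)
    filter_upwards [hheadev] with k hk
    have hsplit : ∑' n, ENNReal.ofReal |αs (φ k) n - β n| * ε n =
        (∑' n : ↑(Finset.range N : Set ℕ), ENNReal.ofReal |αs (φ k) (n:ℕ) - β (n:ℕ)| * ε (n:ℕ)) +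
        ∑' n : ↑((Finset.range N : Set ℕ))ᶜ, ENNReal.ofReal |αs (φ k) (n:ℕ) - β (n:ℕ)| * ε (n:ℕ) :=
      (Summable.tsum_add_tsum_compl ENNReal.summable ENNReal.summable).symm
    have hfinpart : (∑' n : ↑(Finset.range N : Set ℕ),
        ENNReal.ofReal |αs (φ k) (n:ℕ) - β (n:ℕ)| * ε (n:ℕ)) =
        ∑ n ∈ Finset.range N, ENNReal.ofReal |αs (φ k) n - β n| * ε n := by
      exact Finset.tsum_subtype' (Finset.range N)
        (fun n => ENNReal.ofReal |αs (φ k) n - β n| * ε n)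
    calc ∫⁻ ω, ENNReal.ofReal |g (φ k) ω - glim ω| ∂Q
        ≤ ∑' n, ENNReal.ofReal |αs (φ k) n - β n| * ε n := hbound k
      _ ≤ δ / 2 + δ / 2 := by
          rw [hsplit, hfinpart]
          exact add_le_add hk (htail k)
      _ = δ := ENNReal.add_halves δ
      _ ≤ e := by rw [hδdef]; exact ENNReal.half_le_self
end

section
/- Let (Ω, 𝓕, P) be a probability space, (f_n)_{n∈ℕ} a sequence of nonnegative a.e.-finite measurable functions converging in probability to a nonnegative a.e.-finite measurable function f, and let Q be a probability measure equivalent to P with sup_{n∈ℕ} E_Q[f_n] < ∞ and lim_{n→∞} E_Q[|f_n − f|] = 0. Let C' = { Σ_{n∈ℕ} α_n f_n + (1 − Σ_{n∈ℕ} α_n) f : α_n ≥ 0 for all n, Σ_{n∈ℕ} α_n ≤ 1 }. If (g_k)_{k∈ℕ} is a C'-valued sequence converging in probability (with respect to P) to a measurable function g, then g ∈ C' (up to a.e. equality) and lim_{k→∞} E_Q[|g_k − g|] = 0. Hence the topology of convergence in probability and the L¹(Q)-topology coincide on C'. -/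
open MeasureTheory Filter Set ENNReal

/-- If `Q ≪ P` and `Q` is finite, then `P (s i) → 0` implies `Q (s i) → 0`. -/
lemma aux_tendsto_measure_zero {Ω : Type*} [MeasurableSpace Ω] {P Q : Measure Ω}
    [IsFiniteMeasure Q] [SigmaFinite P] (hQP : Q ≪ P) {ι : Type*} {l : Filter ι} {s : ι → Set Ω}
    (h : Tendsto (fun i => P (s i)) l (nhds 0)) : Tendsto (fun i => Q (s i)) l (nhds 0) := by
  have hQ : P.withDensity (Q.rnDeriv P) = Q := Measure.withDensity_rnDeriv_eq Q P hQP
  have hfin : ∫⁻ x, Q.rnDeriv P x ∂P ≠ ⊤ := (Measure.lintegral_rnDeriv_lt_top Q P).ne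
  have h2 : Tendsto (fun i => P (toMeasurable P (s i))) l (nhds 0) := by
    simpa only [measure_toMeasurable] using h
  have h3 : Tendsto (fun i => ∫⁻ x in toMeasurable P (s i), Q.rnDeriv P x ∂P) l (nhds 0) :=
    tendsto_setLIntegral_zero hfin h2
  refine tendsto_of_tendsto_of_tendsto_of_le_of_le tendsto_const_nhds h3 (fun i => zero_le)
    (fun i => ?_)
  calc Q (s i) ≤ Q (toMeasurable P (s i)) := measure_mono (subset_toMeasurable _ _)
    _ = P.withDensity (Q.rnDeriv P) (toMeasurable P (s i)) := by rw [hQ]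
    _ = ∫⁻ x in toMeasurable P (s i), Q.rnDeriv P x ∂P :=
        withDensity_apply _ (measurableSet_toMeasurable _ _)

set_option maxHeartbeats 1000000 in
/-- Master estimate: if a.e. `d ω = Σₙ γₙ Fₙ ω` then `∫|d| ≤ Σₙ |γₙ| ∫|Fₙ|`. -/
lemma aux_key_bound {Ω : Type*} [MeasurableSpace Ω] (Q : Measure Ω) (F : ℕ → Ω → ℝ)
    (hF : ∀ n, Measurable (F n)) (γ : ℕ → ℝ) (d : Ω → ℝ)
    (h : ∀ᵐ ω ∂Q, HasSum (fun n => γ n * F n ω) (d ω)) :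
    ∫⁻ ω, ENNReal.ofReal |d ω| ∂Q ≤
      ∑' n, ENNReal.ofReal |γ n| * ∫⁻ ω, ENNReal.ofReal |F n ω| ∂Q := by
  have hmeas : ∀ n, Measurable fun ω => ENNReal.ofReal (|γ n| * |F n ω|) :=
    fun n => ((hF n).abs.const_mul |γ n|).ennreal_ofReal
  calc ∫⁻ ω, ENNReal.ofReal |d ω| ∂Q
      ≤ ∫⁻ ω, ∑' n, ENNReal.ofReal (|γ n| * |F n ω|) ∂Q := by
        refine lintegral_mono_ae (h.mono fun ω hω => ?_)
        have hs : Summable (fun n => γ n * F n ω) := hω.summable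
        have habs : Summable fun n => |γ n * F n ω| := hs.abs
        have hd : |d ω| ≤ ∑' n, |γ n * F n ω| := by
          have h1 : ‖∑' n, γ n * F n ω‖ ≤ ∑' n, ‖γ n * F n ω‖ :=
            norm_tsum_le_tsum_norm (f := fun n => γ n * F n ω)
              (by simpa only [Real.norm_eq_abs] using habs)
          rw [← hω.tsum_eq]
          simpa only [Real.norm_eq_abs] using h1
        calc ENNReal.ofReal |d ω| ≤ ENNReal.ofReal (∑' n, |γ n * F n ω|) :=
              ENNReal.ofReal_le_ofReal hd
          _ = ∑' n, ENNReal.ofReal |γ n * F n ω| :=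
              ENNReal.ofReal_tsum_of_nonneg (fun n => abs_nonneg _) habs
          _ = ∑' n, ENNReal.ofReal (|γ n| * |F n ω|) := by simp [abs_mul]
    _ = ∑' n, ∫⁻ ω, ENNReal.ofReal (|γ n| * |F n ω|) ∂Q :=
        lintegral_tsum fun n => (hmeas n).aemeasurable
    _ = ∑' n, ENNReal.ofReal |γ n| * ∫⁻ ω, ENNReal.ofReal |F n ω| ∂Q := by
        refine tsum_congr fun n => ?_
        simp_rw [ENNReal.ofReal_mul (abs_nonneg (γ n))]
        rw [lintegral_const_mul _ (hF n).abs.ennreal_ofReal]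

/-- Uniqueness of limits in measure along a nontrivial filter. -/
lemma aux_tendstoInMeasure_unique {Ω : Type*} [MeasurableSpace Ω] {Q : Measure Ω}
    {l : Filter ℕ} [l.NeBot] {g : ℕ → Ω → ℝ} {a b : Ω → ℝ}
    (ha : TendstoInMeasure Q g l a) (hb : TendstoInMeasure Q g l b) : a =ᵐ[Q] b := by
  have key : ∀ ε : ℝ, 0 < ε → Q {x | ε ≤ dist (a x) (b x)} = 0 := by
    intro ε hε
    have hle : ∀ k, Q {x | ε ≤ dist (a x) (b x)} ≤
        Q {x | ε / 2 ≤ dist (g k x) (a x)} + Q {x | ε / 2 ≤ dist (g k x) (b x)} := by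
      intro k
      refine le_trans (measure_mono ?_) (measure_union_le _ _)
      intro x hx
      simp only [Set.mem_setOf_eq] at hx
      have htri : dist (a x) (b x) ≤ dist (g k x) (a x) + dist (g k x) (b x) := by
        rw [dist_comm (g k x) (a x)]; exact dist_triangle _ _ _
      by_contra hmem
      simp only [Set.mem_union, Set.mem_setOf_eq, not_or, not_le] at hmem
      linarith [hmem.1, hmem.2]
    have hsum : Tendsto (fun k => Q {x | ε / 2 ≤ dist (g k x) (a x)} +
        Q {x | ε / 2 ≤ dist (g k x) (b x)}) l (nhds 0) := by
      simpa using (tendstoInMeasure_iff_dist.1 ha (ε / 2) (by linarith)).add (tendstoInMeasure_iff_dist.1 hb (ε / 2) (by linarith))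
    have h0 : Tendsto (fun _ : ℕ => Q {x | ε ≤ dist (a x) (b x)}) l (nhds 0) :=
      tendsto_of_tendsto_of_tendsto_of_le_of_le tendsto_const_nhds hsum (fun _ => zero_le) hle
    exact tendsto_nhds_unique tendsto_const_nhds h0
  have hnull : Q {x | a x ≠ b x} = 0 := by
    refine measure_mono_null (fun x hx => ?_)
      (measure_iUnion_null (s := fun n : ℕ => {x | (1 : ℝ) / (n + 1) ≤ dist (a x) (b x)})
        fun n => key _ (by positivity))
    simp only [Set.mem_setOf_eq] at hx
    have hpos : 0 < dist (a x) (b x) := dist_pos.2 hx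
    obtain ⟨n, hn⟩ := exists_nat_one_div_lt hpos
    exact Set.mem_iUnion.2 ⟨n, hn.le⟩
  exact hnull

theorem stmt8 {Ω : Type*} [MeasurableSpace Ω] (P Q : Measure Ω)
    [IsProbabilityMeasure P] [IsProbabilityMeasure Q]
    (f : ℕ → Ω → ℝ) (flim : Ω → ℝ)
    (hfmeas : ∀ n, Measurable (f n)) (hfnn : ∀ n, 0 ≤ᵐ[P] f n)
    (hflimmeas : Measurable flim) (hflimnn : 0 ≤ᵐ[P] flim)
    (hconv : TendstoInMeasure P f atTop flim)
    (hPQ : P ≪ Q) (hQP : Q ≪ P)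
    (hsup : (⨆ n, ∫⁻ ω, ENNReal.ofReal (f n ω) ∂Q) < ⊤)
    (hL1 : Tendsto (fun n => ∫⁻ ω, ENNReal.ofReal |f n ω - flim ω| ∂Q) atTop (nhds 0))
    (g : ℕ → Ω → ℝ) (glim : Ω → ℝ)
    (hmem : ∀ k, MemCountableConvex P f flim (g k))
    (hglimmeas : Measurable glim)
    (hconv2 : TendstoInMeasure P g atTop glim) :
    MemCountableConvex P f flim glim ∧
      Tendsto (fun k => ∫⁻ ω, ENNReal.ofReal |g k ω - glim ω| ∂Q) atTop (nhds 0) := by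
  classical
  set C : ℕ → ℝ≥0∞ := fun n => ∫⁻ ω, ENNReal.ofReal |f n ω - flim ω| ∂Q with hCdef
  set M : ℝ≥0∞ := ⨆ n, ∫⁻ ω, ENNReal.ofReal (f n ω) ∂Q with hMdef
  have hM : M < ⊤ := hsup
  have hfM : ∀ n, ∫⁻ ω, ENNReal.ofReal (f n ω) ∂Q ≤ M := fun n => by
    rw [hMdef]; exact le_iSup (fun m => ∫⁻ ω, ENNReal.ofReal (f m ω) ∂Q) n
  have hFmeas : ∀ n, Measurable (fun ω => f n ω - flim ω) :=
    fun n => (hfmeas n).sub hflimmeas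
  -- `flim` is Q-integrable
  obtain ⟨n0, hn0⟩ : ∃ n, C n < 1 := (hL1.eventually_lt_const (by norm_num : (0:ℝ≥0∞) < 1)).exists
  have hflimint : ∫⁻ ω, ENNReal.ofReal (flim ω) ∂Q ≤ M + 1 := by
    calc ∫⁻ ω, ENNReal.ofReal (flim ω) ∂Q
        ≤ ∫⁻ ω, (ENNReal.ofReal (f n0 ω) + ENNReal.ofReal |f n0 ω - flim ω|) ∂Q := by
          refine lintegral_mono fun ω => ?_
          have h1 : flim ω - f n0 ω ≤ |f n0 ω - flim ω| := by
            rw [abs_sub_comm]; exact le_abs_self _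
          refine le_trans (ENNReal.ofReal_le_ofReal (by linarith)) ENNReal.ofReal_add_le
      _ = ∫⁻ ω, ENNReal.ofReal (f n0 ω) ∂Q + C n0 :=
          lintegral_add_left (hfmeas n0).ennreal_ofReal _
      _ ≤ M + 1 := add_le_add (hfM n0) hn0.le
  set K : ℝ≥0∞ := M + (M + 1) with hKdef
  have hK : K ≠ ⊤ := by
    simp only [hKdef]
    exact (ENNReal.add_lt_top.2 ⟨hM, ENNReal.add_lt_top.2 ⟨hM, ENNReal.one_lt_top⟩⟩).ne
  have hfnnQ : ∀ n, 0 ≤ᵐ[Q] f n := fun n => hQP.ae_le (hfnn n)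
  have hflimnnQ : 0 ≤ᵐ[Q] flim := hQP.ae_le hflimnn
  have hCbound : ∀ n, C n ≤ K := by
    intro n
    calc C n ≤ ∫⁻ ω, (ENNReal.ofReal (f n ω) + ENNReal.ofReal (flim ω)) ∂Q := by
          refine lintegral_mono_ae ?_
          filter_upwards [hfnnQ n, hflimnnQ] with ω h1 h2
          simp only [Pi.zero_apply] at h1 h2
          have : |f n ω - flim ω| ≤ f n ω + flim ω := by
            rw [abs_sub_le_iff]; constructor <;> linarith
          exact le_trans (ENNReal.ofReal_le_ofReal this) ENNReal.ofReal_add_le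
      _ = ∫⁻ ω, ENNReal.ofReal (f n ω) ∂Q + ∫⁻ ω, ENNReal.ofReal (flim ω) ∂Q :=
          lintegral_add_left (hfmeas n).ennreal_ofReal _
      _ ≤ K := add_le_add (hfM n) hflimint
  have hCne : ∀ n, C n ≠ ⊤ := fun n => ((hCbound n).trans_lt hK.lt_top).ne
  -- choose the convex coefficients
  choose α hα0 hαsum hαle hαHasSum using hmem
  have hcentP : ∀ k, ∀ᵐ ω ∂P,
      HasSum (fun n => α k n * (f n ω - flim ω)) (g k ω - flim ω) := by
    intro k
    filter_upwards [hαHasSum k] with ω hω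
    have h2 : HasSum (fun n => α k n * flim ω) ((∑' n, α k n) * flim ω) :=
      (hαsum k).hasSum.mul_right _
    have h3 := hω.sub h2
    convert h3 using 1
    · rfl
    · funext n; ring
    · ring
  have hcentQ : ∀ k, ∀ᵐ ω ∂Q,
      HasSum (fun n => α k n * (f n ω - flim ω)) (g k ω - flim ω) :=
    fun k => hQP.ae_le (hcentP k)
  -- a.e.-measurability of the `g k`
  have hgae : ∀ k, AEMeasurable (g k) P := by
    intro k
    obtain ⟨G, hGmeas, hG⟩ := measurable_limit_of_tendsto_metrizable_ae (μ := P) (L := atTop)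
      (f := fun N ω => ∑ n ∈ Finset.range N, α k n * (f n ω - flim ω))
      (fun N => (Finset.measurable_sum _ fun n _ => (hFmeas n).const_mul _).aemeasurable)
      ((hcentP k).mono fun ω hω => ⟨_, hω.tendsto_sum_nat⟩)
    refine ⟨fun ω => flim ω + G ω, hflimmeas.add hGmeas, ?_⟩
    filter_upwards [hcentP k, hG] with ω hω hGω
    have := tendsto_nhds_unique hω.tendsto_sum_nat hGω
    show g k ω = flim ω + G ω
    linarith
  have hgaeQ : ∀ k, AEMeasurable (g k) Q := fun k => (hgae k).mono_ac hQP
  have hconv2Q : TendstoInMeasure Q g atTop glim := fun ε hε =>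
    aux_tendsto_measure_zero hQP (hconv2 ε hε)
  have hα01 : ∀ k n, α k n ≤ 1 := fun k n =>
    le_trans (Summable.le_tsum (hαsum k) n fun m _ => hα0 k m) (hαle k)
  -- the key ultrafilter argument
  have key : ∀ U : Ultrafilter ℕ, (U : Filter ℕ) ≤ atTop →
      ∃ β : ℕ → ℝ, (∀ n, 0 ≤ β n) ∧ Summable β ∧ (∑' n, β n) ≤ 1 ∧
        (∀ᵐ ω ∂Q, HasSum (fun n => β n * (f n ω - flim ω)) (glim ω - flim ω)) ∧
        Tendsto (fun k => ∫⁻ ω, ENNReal.ofReal |g k ω - glim ω| ∂Q) (U : Filter ℕ)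
          (nhds 0) := by
    intro U hU
    -- limit coefficients along the ultrafilter
    have hβex : ∀ n, ∃ b : ℝ, b ∈ Icc (0:ℝ) 1 ∧
        Tendsto (fun k => α k n) (U : Filter ℕ) (nhds b) := by
      intro n
      obtain ⟨b, hb, hble⟩ := (isCompact_Icc (a := (0:ℝ)) (b := 1)).ultrafilter_le_nhds
        (U.map fun k => α k n) (by
          rw [Ultrafilter.coe_map]
          refine le_principal_iff.2 (mem_map.2 ?_)
          filter_upwards with k using ⟨hα0 k n, hα01 k n⟩)
      exact ⟨b, hb, by rwa [Ultrafilter.coe_map] at hble⟩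
    choose β hβmem hβtendsto using hβex
    have hβ0 : ∀ n, 0 ≤ β n := fun n => (hβmem n).1
    have hpart : ∀ s : Finset ℕ, ∑ n ∈ s, β n ≤ 1 := by
      intro s
      have ht : Tendsto (fun k => ∑ n ∈ s, α k n) (U : Filter ℕ) (nhds (∑ n ∈ s, β n)) :=
        tendsto_finset_sum _ fun n _ => hβtendsto n
      exact le_of_tendsto ht (Eventually.of_forall fun k =>
        (Summable.sum_le_tsum s (fun m _ => hα0 k m) (hαsum k)).trans (hαle k))
    have hβsum : Summable β := summable_of_sum_le hβ0 hpart
    have hβle : (∑' n, β n) ≤ 1 := Summable.tsum_le_of_sum_le hβsum hpart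
    have hβofReal : (∑' n, ENNReal.ofReal (β n)) ≤ 1 := by
      rw [← ENNReal.ofReal_tsum_of_nonneg hβ0 hβsum]
      exact le_trans (ENNReal.ofReal_le_ofReal hβle) (by simp)
    have hαofReal : ∀ k, (∑' n, ENNReal.ofReal (α k n)) ≤ 1 := by
      intro k
      rw [← ENNReal.ofReal_tsum_of_nonneg (hα0 k) (hαsum k)]
      exact le_trans (ENNReal.ofReal_le_ofReal (hαle k)) (by simp)
    -- a.e. summability of the β-combination
    have hmeasn : ∀ n, Measurable fun ω => ENNReal.ofReal (β n * |f n ω - flim ω|) :=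
      fun n => ((hFmeas n).abs.const_mul (β n)).ennreal_ofReal
    have hint : ∫⁻ ω, ∑' n, ENNReal.ofReal (β n * |f n ω - flim ω|) ∂Q ≠ ⊤ := by
      rw [lintegral_tsum fun n => (hmeasn n).aemeasurable]
      have heq : ∀ n, ∫⁻ ω, ENNReal.ofReal (β n * |f n ω - flim ω|) ∂Q
          = ENNReal.ofReal (β n) * C n := by
        intro n
        simp_rw [ENNReal.ofReal_mul (hβ0 n)]
        rw [lintegral_const_mul _ (hFmeas n).abs.ennreal_ofReal]
      have hle2 : (∑' n, ENNReal.ofReal (β n) * C n) ≤ K := by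
        calc (∑' n, ENNReal.ofReal (β n) * C n) ≤ ∑' n, ENNReal.ofReal (β n) * K :=
              ENNReal.tsum_le_tsum fun n => mul_le_mul_right (hCbound n) _
          _ = (∑' n, ENNReal.ofReal (β n)) * K := ENNReal.tsum_mul_right
          _ ≤ 1 * K := mul_le_mul_left hβofReal _
          _ = K := one_mul K
      exact ne_top_of_le_ne_top hK (le_of_eq_of_le (tsum_congr heq) hle2)
    have hae2 : ∀ᵐ ω ∂Q, Summable (fun n => β n * (f n ω - flim ω)) := by
      have hae1 := ae_lt_top (Measurable.ennreal_tsum hmeasn) hint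
      filter_upwards [hae1] with ω hω
      have hsum1 : Summable (fun n => β n * |f n ω - flim ω|) := by
        have h2 := ENNReal.summable_toReal hω.ne
        refine h2.congr fun n => ?_
        exact ENNReal.toReal_ofReal (mul_nonneg (hβ0 n) (abs_nonneg _))
      exact Summable.of_abs (hsum1.congr fun n => by
        rw [abs_mul, abs_of_nonneg (hβ0 n)])
    -- a measurable representative of the β-combination
    obtain ⟨G, hGmeas, hGtendsto⟩ := measurable_limit_of_tendsto_metrizable_ae (μ := Q)
      (L := atTop)
      (f := fun N ω => ∑ n ∈ Finset.range N, β n * (f n ω - flim ω))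
      (fun N => (Finset.measurable_sum _ fun n _ => (hFmeas n).const_mul _).aemeasurable)
      (hae2.mono fun ω hω => ⟨_, hω.hasSum.tendsto_sum_nat⟩)
    have hGhasSum : ∀ᵐ ω ∂Q, HasSum (fun n => β n * (f n ω - flim ω)) (G ω) := by
      filter_upwards [hae2, hGtendsto] with ω h1 h2
      have h3 := tendsto_nhds_unique h1.hasSum.tendsto_sum_nat h2
      exact h3 ▸ h1.hasSum
    set h : Ω → ℝ := fun ω => flim ω + G ω with hhdef
    have hgh : ∀ k, ∀ᵐ ω ∂Q,
        HasSum (fun n => (α k n - β n) * (f n ω - flim ω)) (g k ω - h ω) := by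
      intro k
      filter_upwards [hcentQ k, hGhasSum] with ω h1 h2
      have h3 := h1.sub h2
      convert h3 using 1
      · rfl
      · funext n; ring
      · show g k ω - (flim ω + G ω) = _; ring
    have hD1 : ∀ k, ∫⁻ ω, ENNReal.ofReal |g k ω - h ω| ∂Q ≤
        ∑' n, ENNReal.ofReal |α k n - β n| * C n :=
      fun k => aux_key_bound Q _ hFmeas _ _ (hgh k)
    -- the dominating series tends to 0 along U
    have hT : Tendsto (fun k => ∑' n, ENNReal.ofReal |α k n - β n| * C n) (U : Filter ℕ)
        (nhds 0) := by
      rw [ENNReal.tendsto_nhds_zero]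
      intro ε hε
      have hε2 : (0:ℝ≥0∞) < ε / 2 := ENNReal.div_pos hε.ne' (by norm_num)
      have hε4 : (0:ℝ≥0∞) < ε / 2 / 2 := ENNReal.div_pos hε2.ne' (by norm_num)
      obtain ⟨N, hN⟩ : ∃ N, ∀ n, N ≤ n → C n ≤ ε / 2 / 2 :=
        eventually_atTop.mp (hL1.eventually_le_const hε4)
      have hhead : Tendsto (fun k => ∑ n ∈ Finset.range N, ENNReal.ofReal |α k n - β n| * C n)
          (U : Filter ℕ) (nhds 0) := by
        have hterm : ∀ n, Tendsto (fun k => ENNReal.ofReal |α k n - β n| * C n)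
            (U : Filter ℕ) (nhds 0) := by
          intro n
          have h1 : Tendsto (fun k => |α k n - β n|) (U : Filter ℕ) (nhds 0) := by
            have h2 := (hβtendsto n).sub (tendsto_const_nhds (x := β n))
            simpa using h2.abs
          have h3 : Tendsto (fun k => ENNReal.ofReal |α k n - β n|) (U : Filter ℕ)
              (nhds 0) := by
            simpa using ENNReal.tendsto_ofReal h1
          simpa using ENNReal.Tendsto.mul_const h3 (Or.inr (hCne n))
        have h4 := tendsto_finset_sum (Finset.range N) fun n _ => hterm n
        simpa using h4
      have hheadev : ∀ᶠ k in (U : Filter ℕ),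
          (∑ n ∈ Finset.range N, ENNReal.ofReal |α k n - β n| * C n) ≤ ε / 2 :=
        hhead.eventually_le_const hε2
      filter_upwards [hheadev] with k hk
      have hsplit : (∑' n, ENNReal.ofReal |α k n - β n| * C n)
          = (∑ n ∈ Finset.range N, ENNReal.ofReal |α k n - β n| * C n)
            + ∑' n, (if n < N then 0 else ENNReal.ofReal |α k n - β n| * C n) := by
        calc (∑' n, ENNReal.ofReal |α k n - β n| * C n)
            = ∑' n, ((if n < N then ENNReal.ofReal |α k n - β n| * C n else 0)
                + if n < N then 0 else ENNReal.ofReal |α k n - β n| * C n) :=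
              tsum_congr fun n => by split <;> simp
          _ = (∑' n, if n < N then ENNReal.ofReal |α k n - β n| * C n else 0)
                + ∑' n, (if n < N then 0 else ENNReal.ofReal |α k n - β n| * C n) :=
              ENNReal.tsum_add
          _ = (∑ n ∈ Finset.range N, ENNReal.ofReal |α k n - β n| * C n)
                + ∑' n, (if n < N then 0 else ENNReal.ofReal |α k n - β n| * C n) := by
              congr 1
              rw [tsum_eq_sum (s := Finset.range N)
                (fun b hb => if_neg fun hbn => hb (Finset.mem_range.mpr hbn))]
              exact Finset.sum_congr rfl fun b hb => by simp [Finset.mem_range.mp hb]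
      have htail : (∑' n, (if n < N then 0 else ENNReal.ofReal |α k n - β n| * C n)) ≤ ε / 2 := by
        calc (∑' n, (if n < N then 0 else ENNReal.ofReal |α k n - β n| * C n))
            ≤ ∑' n, (ENNReal.ofReal (α k n) + ENNReal.ofReal (β n)) * (ε / 2 / 2) := by
              refine ENNReal.tsum_le_tsum fun n => ?_
              split
              · exact zero_le
              · rename_i hn
                refine mul_le_mul' ?_ (hN n (not_lt.mp hn))
                refine le_trans (ENNReal.ofReal_le_ofReal ?_) ENNReal.ofReal_add_le
                have h5 := hα0 k n
                have h6 := hβ0 n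
                exact abs_le.mpr ⟨by linarith, by linarith⟩
          _ = ((∑' n, ENNReal.ofReal (α k n)) + ∑' n, ENNReal.ofReal (β n)) * (ε / 2 / 2) := by
              rw [ENNReal.tsum_mul_right, ENNReal.tsum_add]
          _ ≤ (1 + 1) * (ε / 2 / 2) := mul_le_mul_left (add_le_add (hαofReal k) hβofReal) _
          _ = ε / 2 / 2 + ε / 2 / 2 := by rw [one_add_one_eq_two, two_mul]
          _ = ε / 2 := ENNReal.add_halves _
      calc (∑' n, ENNReal.ofReal |α k n - β n| * C n)
          = _ := hsplit
        _ ≤ ε / 2 + ε / 2 := add_le_add hk htail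
        _ = ε := ENNReal.add_halves ε
    -- L¹(Q) convergence towards h along U
    have hDh : Tendsto (fun k => ∫⁻ ω, ENNReal.ofReal |g k ω - h ω| ∂Q) (U : Filter ℕ)
        (nhds 0) :=
      tendsto_of_tendsto_of_tendsto_of_le_of_le tendsto_const_nhds hT (fun k => zero_le) hD1
    have hmeash : Measurable h := hflimmeas.add hGmeas
    have habsmeas : ∀ k, AEMeasurable (fun ω => ENNReal.ofReal |g k ω - h ω|) Q := by
      intro k
      have h1 : AEMeasurable (fun ω => ‖g k ω - h ω‖) Q :=
        ((hgaeQ k).sub hmeash.aemeasurable).norm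
      exact ENNReal.measurable_ofReal.comp_aemeasurable
        (by simpa only [Real.norm_eq_abs] using h1)
    -- convergence in Q-measure towards h along U
    have hinm : TendstoInMeasure Q g (U : Filter ℕ) h := by
      rw [tendstoInMeasure_iff_dist]
      intro ε hε
      have hne : ENNReal.ofReal ε ≠ 0 := by
        simp [ENNReal.ofReal_eq_zero, not_le, hε]
      have hbnd : ∀ k, Q {x | ε ≤ dist (g k x) (h x)} ≤
          (∫⁻ ω, ENNReal.ofReal |g k ω - h ω| ∂Q) * (ENNReal.ofReal ε)⁻¹ := by
        intro k
        have hub := mul_meas_ge_le_lintegral₀ (μ := Q) (habsmeas k) (ENNReal.ofReal ε)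
        have hset : {x | ε ≤ dist (g k x) (h x)} =
            {x | ENNReal.ofReal ε ≤ ENNReal.ofReal |g k x - h x|} := by
          ext x
          simp only [Set.mem_setOf_eq, Real.dist_eq,
            ENNReal.ofReal_le_ofReal_iff (abs_nonneg _)]
        rw [hset]
        calc Q {x | ENNReal.ofReal ε ≤ ENNReal.ofReal |g k x - h x|}
            = (ENNReal.ofReal ε)⁻¹
              * (ENNReal.ofReal ε * Q {x | ENNReal.ofReal ε ≤ ENNReal.ofReal |g k x - h x|}) := by
              rw [← mul_assoc, ENNReal.inv_mul_cancel hne ENNReal.ofReal_ne_top, one_mul]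
          _ ≤ (ENNReal.ofReal ε)⁻¹ * ∫⁻ ω, ENNReal.ofReal |g k ω - h ω| ∂Q :=
              mul_le_mul_right hub _
          _ = (∫⁻ ω, ENNReal.ofReal |g k ω - h ω| ∂Q) * (ENNReal.ofReal ε)⁻¹ := mul_comm _ _
      have hz : Tendsto (fun k =>
          (∫⁻ ω, ENNReal.ofReal |g k ω - h ω| ∂Q) * (ENNReal.ofReal ε)⁻¹)
          (U : Filter ℕ) (nhds 0) := by
        simpa using ENNReal.Tendsto.mul_const hDh (Or.inr (ENNReal.inv_ne_top.2 hne))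
      exact tendsto_of_tendsto_of_tendsto_of_le_of_le tendsto_const_nhds hz
        (fun _ => zero_le) hbnd
    have hinm2 : TendstoInMeasure Q g (U : Filter ℕ) glim := fun ε hε =>
      (hconv2Q ε hε).mono_left hU
    have : ((U : Filter ℕ)).NeBot := Ultrafilter.neBot U
    have hhglim : h =ᵐ[Q] glim := aux_tendstoInMeasure_unique hinm hinm2
    refine ⟨β, hβ0, hβsum, hβle, ?_, ?_⟩
    · filter_upwards [hGhasSum, hhglim] with ω h1 h2
      have h4 : flim ω + G ω = glim ω := h2
      have h3 : G ω = glim ω - flim ω := by linarith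
      exact h3 ▸ h1
    · have heq2 : (fun k => ∫⁻ ω, ENNReal.ofReal |g k ω - glim ω| ∂Q)
          = fun k => ∫⁻ ω, ENNReal.ofReal |g k ω - h ω| ∂Q := by
        funext k
        refine lintegral_congr_ae (hhglim.mono fun ω hω => ?_)
        show ENNReal.ofReal |g k ω - glim ω| = ENNReal.ofReal |g k ω - h ω|
        rw [hω]
      rw [heq2]
      exact hDh
  constructor
  · obtain ⟨U, hU⟩ := Ultrafilter.exists_le (atTop : Filter ℕ)
    obtain ⟨β, hβ0, hβsum, hβle, hβHasSum, -⟩ := key U hU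
    refine ⟨β, hβ0, hβsum, hβle, ?_⟩
    have hQae := hPQ.ae_le hβHasSum
    filter_upwards [hQae] with ω hω
    have h2 : HasSum (fun n => β n * flim ω) ((∑' n, β n) * flim ω) :=
      hβsum.hasSum.mul_right _
    have h3 := hω.add h2
    convert h3 using 1
    · funext n; ring
    · ring
  · rw [tendsto_iff_ultrafilter]
    intro U hU
    obtain ⟨β, hβ0, hβsum, hβle, hβHasSum, hfin⟩ := key U hU
    exact hfin
end

section
/- Let (Ω, 𝓕, P) be a probability space and (g_n)_{n∈ℕ} a sequence of nonnegative a.e.-finite measurable functions. Then there exist a measurable function h : Ω → [0,∞] and a sequence (h_n) of forward convex combinations of (g_n) such that (h_n) converges to h P-a.e. If, moreover, the convex hull of {g_n : n ∈ ℕ} is bounded in probability, then h < ∞ P-a.e. -/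
open MeasureTheory Filter Set

/-- A set `B` of (nonnegative) functions is bounded in probability with respect to `P`:
`sup_{b ∈ B} P(b > ℓ) → 0` as `ℓ → ∞`. -/
def BddInProbability {Ω : Type*} [MeasurableSpace Ω] (P : MeasureTheory.Measure Ω)
    (B : Set (Ω → ℝ)) : Prop :=
  Tendsto (fun ℓ : ℝ => ⨆ b ∈ B, P {ω | ℓ < b ω}) atTop (nhds 0)

lemma exp_midpoint_gap (x y : ℝ) :
    (Real.exp (-x/2) - Real.exp (-y/2))^2 =
      2*(1 - Real.exp (-((1:ℝ)/2*x + 1/2*y))) - (1 - Real.exp (-x)) - (1 - Real.exp (-y)) := by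
  have hxy : Real.exp (-((1:ℝ)/2*x + 1/2*y)) = Real.exp (-x/2) * Real.exp (-y/2) := by
    rw [← Real.exp_add]; ring_nf
  have hx : Real.exp (-x) = Real.exp (-x/2) * Real.exp (-x/2) := by
    rw [← Real.exp_add]; ring_nf
  have hy : Real.exp (-y) = Real.exp (-y/2) * Real.exp (-y/2) := by
    rw [← Real.exp_add]; ring_nf
  rw [hxy, hx, hy]; ring

section Pieces
variable {Ω : Type*} [MeasurableSpace Ω] (P : Measure Ω) [IsProbabilityMeasure P]
  (g : ℕ → Ω → ℝ)

-- members of forward convex hulls are measurable and a.e. nonnegative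
lemma hull_prop (hgmeas : ∀ n, Measurable (g n)) (hgnn : ∀ n, 0 ≤ᵐ[P] g n) (j : ℕ) :
    convexHull ℝ {f : Ω → ℝ | ∃ k, j ≤ k ∧ f = g k} ⊆ {f : Ω → ℝ | Measurable f ∧ 0 ≤ᵐ[P] f} := by
  apply convexHull_min
  · rintro f ⟨k, -, rfl⟩; exact ⟨hgmeas k, hgnn k⟩
  · rintro f ⟨hfm, hfn⟩ f' ⟨hfm', hfn'⟩ a b ha hb hab
    constructor
    · exact ((hfm.const_mul a).add (hfm'.const_mul b) : Measurable fun ω => a * f ω + b * f' ω)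
    · filter_upwards [hfn, hfn'] with ω h1 h2
      have : (a • f + b • f') ω = a * f ω + b * f' ω := rfl
      rw [Pi.zero_apply, this]
      exact add_nonneg (mul_nonneg ha h1) (mul_nonneg hb h2)

lemma uu_int {f : Ω → ℝ} (hm : Measurable f) (hn : 0 ≤ᵐ[P] f) :
    Integrable (fun ω => 1 - Real.exp (-f ω)) P := by
  refine Integrable.mono' (integrable_const 1)
    ((measurable_const.sub (Real.measurable_exp.comp hm.neg)).aestronglyMeasurable) ?_
  filter_upwards [hn] with ω h0
  simp only [Pi.zero_apply] at h0
  rw [Real.norm_eq_abs, abs_le]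
  constructor
  · have := Real.exp_le_one_iff.mpr (by linarith : -f ω ≤ 0)
    linarith
  · have := Real.exp_pos (-f ω)
    linarith

lemma uu_int_nonneg {f : Ω → ℝ} (hn : 0 ≤ᵐ[P] f) :
    0 ≤ ∫ ω, (1 - Real.exp (-f ω)) ∂P := by
  refine integral_nonneg_of_ae ?_
  filter_upwards [hn] with ω h0
  simp only [Pi.zero_apply] at h0
  have := Real.exp_le_one_iff.mpr (by linarith : -f ω ≤ 0)
  simp only [Pi.zero_apply]
  linarith

lemma uu_int_le_one {f : Ω → ℝ} (hm : Measurable f) (hn : 0 ≤ᵐ[P] f) :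
    ∫ ω, (1 - Real.exp (-f ω)) ∂P ≤ 1 := by
  calc ∫ ω, (1 - Real.exp (-f ω)) ∂P ≤ ∫ _ω, (1:ℝ) ∂P := by
        refine integral_mono (uu_int P hm hn) (integrable_const 1) ?_
        intro ω
        have := Real.exp_pos (-f ω); dsimp; linarith
    _ = 1 := by simp

end Pieces

set_option maxHeartbeats 1000000 in
theorem stmt10 {Ω : Type*} [MeasurableSpace Ω] (P : Measure Ω)
    [IsProbabilityMeasure P]
    (g : ℕ → Ω → ℝ)
    (hgmeas : ∀ n, Measurable (g n)) (hgnn : ∀ n, 0 ≤ᵐ[P] g n) :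
    ∃ (h : Ω → ENNReal) (hn : ℕ → Ω → ℝ), Measurable h ∧ FwdConvexCombos g hn ∧
      (∀ᵐ ω ∂P, Tendsto (fun n => ENNReal.ofReal (hn n ω)) atTop (nhds (h ω))) ∧
      (BddInProbability P (convexHull ℝ (Set.range g)) → ∀ᵐ ω ∂P, h ω < ⊤) := by
  classical
  set C : ℕ → Set (Ω → ℝ) := fun j => convexHull ℝ {f : Ω → ℝ | ∃ k, j ≤ k ∧ f = g k} with hC
  have hCprop : ∀ j, ∀ f ∈ C j, Measurable f ∧ 0 ≤ᵐ[P] f :=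
    fun j f hf => hull_prop P g hgmeas hgnn j hf
  have hCmono : ∀ {j k : ℕ}, j ≤ k → C k ⊆ C j := by
    intro j k hjk
    exact convexHull_mono (by rintro f ⟨i, hi, rfl⟩; exact ⟨i, hjk.trans hi, rfl⟩)
  have hCrange : ∀ j, C j ⊆ convexHull ℝ (Set.range g) := by
    intro j
    exact convexHull_mono (by rintro f ⟨i, -, rfl⟩; exact ⟨i, rfl⟩)
  set I : (Ω → ℝ) → ℝ := fun f => ∫ ω, (1 - Real.exp (-f ω)) ∂P with hI
  have hgC : ∀ j, g j ∈ C j := fun j => subset_convexHull ℝ _ ⟨j, le_rfl, rfl⟩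
  have hSne : ∀ j, (I '' C j).Nonempty := fun j => ⟨I (g j), g j, hgC j, rfl⟩
  have hSbdd : ∀ j, BddAbove (I '' C j) := by
    intro j
    refine ⟨1, ?_⟩
    rintro r ⟨f, hf, rfl⟩
    exact uu_int_le_one P (hCprop j f hf).1 (hCprop j f hf).2
  set S : ℕ → ℝ := fun j => sSup (I '' C j) with hS
  have hS_anti : Antitone S := by
    intro j k hjk
    exact csSup_le_csSup (hSbdd j) (hSne k) (image_mono (hCmono hjk))
  have hS_nonneg : ∀ j, 0 ≤ S j := by
    intro j
    have h1 : I (g j) ≤ S j := le_csSup (hSbdd j) ⟨g j, hgC j, rfl⟩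
    have h2 : 0 ≤ I (g j) := uu_int_nonneg P (hgnn j)
    linarith
  set s : ℝ := ⨅ j, S j with hs
  have hbddb : BddBelow (range S) := ⟨0, by rintro r ⟨j, rfl⟩; exact hS_nonneg j⟩
  have hS_tendsto : Tendsto S atTop (nhds s) := tendsto_atTop_ciInf hS_anti hbddb
  have hs_le : ∀ j, s ≤ S j := fun j => ciInf_le hbddb j
  -- choose near-optimizers
  have hex : ∀ j : ℕ, ∃ f, f ∈ C j ∧ S j - 1/((j:ℝ)+1) < I f := by
    intro j
    have hpos : 0 < 1/((j:ℝ)+1) := by positivity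
    have : S j - 1/((j:ℝ)+1) < sSup (I '' C j) := by
      have : S j = sSup (I '' C j) := rfl
      linarith [this ▸ (by linarith : S j - 1/((j:ℝ)+1) < S j)]
    obtain ⟨r, ⟨f, hf, rfl⟩, hr⟩ := exists_lt_of_lt_csSup (hSne j) this
    exact ⟨f, hf, hr⟩
  choose hN hNC hNI using hex
  have hNmeas : ∀ j, Measurable (hN j) := fun j => (hCprop j _ (hNC j)).1
  have hNnn : ∀ j, 0 ≤ᵐ[P] hN j := fun j => (hCprop j _ (hNC j)).2
  set F : ℕ → Ω → ℝ := fun j ω => Real.exp (-hN j ω / 2) with hF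
  have hFmeas : ∀ j, Measurable (F j) :=
    fun j => Real.measurable_exp.comp ((hNmeas j).neg.div_const 2)
  have hFpos : ∀ j ω, 0 < F j ω := fun j ω => Real.exp_pos _
  have hFle : ∀ j, ∀ᵐ ω ∂P, F j ω ≤ 1 := by
    intro j
    filter_upwards [hNnn j] with ω h0
    simp only [Pi.zero_apply] at h0
    exact Real.exp_le_one_iff.mpr (by linarith)
  -- key quantitative Cauchy estimate
  have hKey : ∀ n m : ℕ, n ≤ m →
      ∫ ω, (F n ω - F m ω)^2 ∂P ≤ (S n - s) + 2/((n:ℝ)+1) := by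
    intro n m hnm
    set mid : Ω → ℝ := (1/2 : ℝ) • hN n + (1/2 : ℝ) • hN m with hmid
    have hmidC : mid ∈ C n := by
      have hc := convex_convexHull ℝ {f : Ω → ℝ | ∃ k, n ≤ k ∧ f = g k}
      exact hc (hNC n) (hCmono hnm (hNC m)) (by norm_num) (by norm_num) (by norm_num)
    have hmidmeas := (hCprop n _ hmidC).1
    have hmidnn := (hCprop n _ hmidC).2
    have Imid_le : I mid ≤ S n := le_csSup (hSbdd n) ⟨mid, hmidC, rfl⟩
    have hint_mid := uu_int P hmidmeas hmidnn
    have hint_n := uu_int P (hNmeas n) (hNnn n)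
    have hint_m := uu_int P (hNmeas m) (hNnn m)
    have heq : ∀ ω, (F n ω - F m ω)^2 =
        2*(1 - Real.exp (-mid ω)) - (1 - Real.exp (-hN n ω)) - (1 - Real.exp (-hN m ω)) := by
      intro ω
      have : mid ω = (1:ℝ)/2 * hN n ω + 1/2 * hN m ω := rfl
      rw [this]
      exact exp_midpoint_gap (hN n ω) (hN m ω)
    have i1 : Integrable (fun ω => 2 * (1 - Real.exp (-mid ω)) - (1 - Real.exp (-hN n ω))) P :=
      (hint_mid.const_mul 2).sub hint_n
    have i2 : Integrable (fun ω => 2 * (1 - Real.exp (-mid ω))) P := hint_mid.const_mul 2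
    have : ∫ ω, (F n ω - F m ω)^2 ∂P = 2 * I mid - I (hN n) - I (hN m) := by
      rw [show (fun ω => (F n ω - F m ω)^2) =
        (fun ω => 2*(1 - Real.exp (-mid ω)) - (1 - Real.exp (-hN n ω)) - (1 - Real.exp (-hN m ω)))
        from funext heq]
      rw [integral_sub i1 hint_m, integral_sub i2 hint_n, integral_const_mul]
    rw [this]
    have h1 : S n - 1/((n:ℝ)+1) < I (hN n) := hNI n
    have h2 : S m - 1/((m:ℝ)+1) < I (hN m) := hNI m
    have h3 : s ≤ S m := hs_le m
    have h4 : 1/((m:ℝ)+1) ≤ 1/((n:ℝ)+1) := by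
      apply one_div_le_one_div_of_le (by positivity)
      have : (n:ℝ) ≤ m := Nat.cast_le.mpr hnm
      linarith
    have h5 : 2 / ((n:ℝ)+1) = 1/((n:ℝ)+1) + 1/((n:ℝ)+1) := by ring
    linarith

  -- the quantitative bound tends to zero
  have hb_tendsto : Tendsto (fun j : ℕ => (S j - s) + 2/((j:ℝ)+1)) atTop (nhds 0) := by
    have h1 : Tendsto (fun j : ℕ => S j - s) atTop (nhds 0) := by
      simpa using hS_tendsto.sub_const s
    have h2 : Tendsto (fun j : ℕ => 2/((j:ℝ)+1)) atTop (nhds 0) := by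
      have := tendsto_one_div_add_atTop_nhds_zero_nat.const_mul (2:ℝ)
      simp only [mul_one_div] at this
      simpa using this
    simpa using h1.add h2
  have hsel : ∀ k : ℕ, ∃ N : ℕ, ∀ j, N ≤ j → (S j - s) + 2/((j:ℝ)+1) ≤ (8:ℝ)⁻¹^k := by
    intro k
    have hpos : (0:ℝ) < 8⁻¹^k := by positivity
    obtain ⟨N, hN'⟩ := eventually_atTop.mp (hb_tendsto.eventually_lt_const hpos)
    exact ⟨N, fun j hj => (hN' j hj).le⟩
  choose NN hNN using hsel
  set nn : ℕ → ℕ := fun k => Nat.rec (NN 0) (fun k ih => max (ih+1) (max (NN (k+1)) (k+1))) k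
    with hnn
  have hnn_succ : ∀ k, nn (k+1) = max (nn k + 1) (max (NN (k+1)) (k+1)) := fun k => rfl
  have hnn_lt : ∀ k, nn k < nn (k+1) := by
    intro k; rw [hnn_succ]; exact lt_of_lt_of_le (Nat.lt_succ_self _) (le_max_left _ _)
  have hnn_ge_k : ∀ k, k ≤ nn k := by
    intro k
    cases k with
    | zero => exact Nat.zero_le _
    | succ k => rw [hnn_succ]; exact le_trans (le_max_right _ _) (le_max_right _ _)
  have hnn_N : ∀ k, NN k ≤ nn k := by
    intro k
    cases k with
    | zero => exact le_rfl
    | succ k => rw [hnn_succ]; exact le_trans (le_max_left _ _) (le_max_right _ _)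
  -- square-integral bounds along the subsequence
  have hsq : ∀ k, ∫ ω, (F (nn k) ω - F (nn (k+1)) ω)^2 ∂P ≤ (8:ℝ)⁻¹^k := by
    intro k
    refine le_trans (hKey _ _ (hnn_lt k).le) ?_
    exact hNN k (nn k) (hnn_N k)
  have hsqmeas : ∀ k, Measurable (fun ω => (F (nn k) ω - F (nn (k+1)) ω)^2) :=
    fun k => ((hFmeas _).sub (hFmeas _)).pow_const 2
  have hsqint : ∀ k, Integrable (fun ω => (F (nn k) ω - F (nn (k+1)) ω)^2) P := by
    intro k
    refine Integrable.mono' (integrable_const 1) (hsqmeas k).aestronglyMeasurable ?_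
    filter_upwards [hFle (nn k), hFle (nn (k+1))] with ω h1 h2
    have p1 := hFpos (nn k) ω
    have p2 := hFpos (nn (k+1)) ω
    rw [Real.norm_eq_abs, abs_of_nonneg (sq_nonneg _)]
    nlinarith
  -- Chebyshev + Borel-Cantelli
  set A : ℕ → Set Ω := fun k => {ω | (4:ℝ)⁻¹^k ≤ (F (nn k) ω - F (nn (k+1)) ω)^2} with hA
  have hcheb : ∀ k, P (A k) ≤ ENNReal.ofReal ((2:ℝ)⁻¹^k) := by
    intro k
    have h1 := mul_meas_ge_le_integral_of_nonneg
      (ae_of_all P fun ω => sq_nonneg (F (nn k) ω - F (nn (k+1)) ω)) (hsqint k) ((4:ℝ)⁻¹^k)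
    have h2 : (4:ℝ)⁻¹^k * (P (A k)).toReal ≤ (8:ℝ)⁻¹^k := le_trans h1 (hsq k)
    have h3 : (8:ℝ)⁻¹^k = (4:ℝ)⁻¹^k * (2:ℝ)⁻¹^k := by rw [← mul_pow]; norm_num
    have h4 : (0:ℝ) < (4:ℝ)⁻¹^k := by positivity
    rw [ENNReal.le_ofReal_iff_toReal_le (measure_ne_top P _) (by positivity)]
    exact le_of_mul_le_mul_left (by linarith) h4
  have hts : ∑' k, P (A k) ≠ ⊤ := by
    apply ne_of_lt
    calc ∑' k, P (A k) ≤ ∑' k, ENNReal.ofReal ((2:ℝ)⁻¹^k) := ENNReal.tsum_le_tsum hcheb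
      _ = ENNReal.ofReal (∑' k, (2:ℝ)⁻¹^k) :=
          (ENNReal.ofReal_tsum_of_nonneg (fun k => by positivity)
            (summable_geometric_of_lt_one (by norm_num) (by norm_num))).symm
      _ < ⊤ := ENNReal.ofReal_lt_top
  have hBC : P (limsup A atTop) = 0 := measure_limsup_atTop_eq_zero hts
  have hae1 : ∀ᵐ ω ∂P, ∀ᶠ k in atTop, (F (nn k) ω - F (nn (k+1)) ω)^2 < (4:ℝ)⁻¹^k := by
    filter_upwards [measure_eq_zero_iff_ae_notMem.mp hBC] with ω hω
    rw [mem_limsup_iff_frequently_mem, not_frequently] at hω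
    filter_upwards [hω] with k hk
    exact not_le.mp hk
  -- a.e. existence of the limit of F (nn k)
  have hae2 : ∀ᵐ ω ∂P, ∃ l, Tendsto (fun k => F (nn k) ω) atTop (nhds l) := by
    filter_upwards [hae1] with ω hω
    obtain ⟨K, hK⟩ := eventually_atTop.mp hω
    have hd : ∀ k : ℕ, dist (F (nn (k+K)) ω) (F (nn (k+1+K)) ω) ≤ (2:ℝ)⁻¹^K * (2:ℝ)⁻¹^k := by
      intro k
      have h1 := hK (k+K) (by omega)
      have e : k+1+K = (k+K)+1 := by omega
      rw [e, Real.dist_eq]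
      have h2 : (4:ℝ)⁻¹^(k+K) = ((2:ℝ)⁻¹^(k+K))^2 := by
        rw [← pow_mul, show (4:ℝ)⁻¹ = (2:ℝ)⁻¹^2 by norm_num, ← pow_mul]
        ring_nf
      rw [h2] at h1
      have hpos : (0:ℝ) < (2:ℝ)⁻¹^(k+K) := by positivity
      have habs : |F (nn (k+K)) ω - F (nn ((k+K)+1)) ω| ≤ (2:ℝ)⁻¹^(k+K) := by
        nlinarith [sq_abs (F (nn (k+K)) ω - F (nn ((k+K)+1)) ω),
          abs_nonneg (F (nn (k+K)) ω - F (nn ((k+K)+1)) ω)]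
      calc |F (nn (k+K)) ω - F (nn ((k+K)+1)) ω| ≤ (2:ℝ)⁻¹^(k+K) := habs
        _ = (2:ℝ)⁻¹^K * (2:ℝ)⁻¹^k := by rw [pow_add]; ring
    have hcs : CauchySeq (fun k => F (nn (k+K)) ω) :=
      cauchySeq_of_dist_le_of_summable _ hd
        ((summable_geometric_of_lt_one (by norm_num) (by norm_num)).mul_left _)
    obtain ⟨l, hl⟩ := cauchySeq_tendsto_of_complete hcs
    exact ⟨l, (tendsto_add_atTop_iff_nat K).mp hl⟩
  obtain ⟨flim, hflim_meas, hflim_tendsto⟩ :=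
    measurable_limit_of_tendsto_metrizable_ae (fun k => (hFmeas (nn k)).aemeasurable) hae2

  -- the candidate limit in ENNReal
  set h0 : Ω → ENNReal :=
    fun ω => if flim ω ≤ 0 then ⊤ else ENNReal.ofReal (-2 * Real.log (flim ω)) with hh0
  have hh0_meas : Measurable h0 := by
    refine Measurable.ite (measurableSet_le hflim_meas measurable_const) measurable_const ?_
    exact ENNReal.measurable_ofReal.comp ((Real.measurable_log.comp hflim_meas).const_mul (-2))
  have hlog : ∀ j ω, hN j ω = -2 * Real.log (F j ω) := by
    intro j ω
    show hN j ω = -2 * Real.log (Real.exp (-hN j ω / 2))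
    rw [Real.log_exp]; ring
  -- divergence on the zero set of flim
  have hdiv : ∀ ω, Tendsto (fun k => F (nn k) ω) atTop (nhds (flim ω)) → flim ω ≤ 0 →
      Tendsto (fun k => hN (nn k) ω) atTop atTop := by
    intro ω hω hle
    have hge : 0 ≤ flim ω := ge_of_tendsto hω (Eventually.of_forall fun k => (hFpos _ ω).le)
    have h0' : flim ω = 0 := le_antisymm hle hge
    rw [h0'] at hω
    have hF0 : Tendsto (fun k => F (nn k) ω) atTop (nhdsWithin 0 (Ioi 0)) :=
      tendsto_nhdsWithin_of_tendsto_nhds_of_eventually_within _ hω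
        (Eventually.of_forall fun k => hFpos _ ω)
    have hlogt : Tendsto (fun k => Real.log (F (nn k) ω)) atTop atBot :=
      Real.tendsto_log_nhdsGT_zero.comp hF0
    have hneg : Tendsto (fun k => -Real.log (F (nn k) ω)) atTop atTop :=
      tendsto_neg_atBot_atTop.comp hlogt
    have h2 : Tendsto (fun k => (2:ℝ) * -Real.log (F (nn k) ω)) atTop atTop :=
      hneg.const_mul_atTop (by norm_num)
    have he : (fun k => hN (nn k) ω) = fun k => (2:ℝ) * -Real.log (F (nn k) ω) := by
      funext k; rw [hlog (nn k) ω]; ring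
    rw [he]; exact h2
  -- a.e. convergence of ofReal ∘ hN ∘ nn to h0
  have hconv : ∀ᵐ ω ∂P, Tendsto (fun k => ENNReal.ofReal (hN (nn k) ω)) atTop (nhds (h0 ω)) := by
    filter_upwards [hflim_tendsto] with ω hω
    by_cases hle : flim ω ≤ 0
    · have hd := hdiv ω hω hle
      have ht : Tendsto (fun k => ENNReal.ofReal (hN (nn k) ω)) atTop (nhds ⊤) :=
        ENNReal.tendsto_ofReal_atTop.comp hd
      have : h0 ω = ⊤ := by rw [hh0]; simp [hle]
      rw [this]; exact ht
    · have hle' := not_le.mp hle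
      have hlogc : Tendsto (fun k => Real.log (F (nn k) ω)) atTop (nhds (Real.log (flim ω))) :=
        (Real.continuousAt_log (ne_of_gt hle')).tendsto.comp hω
      have h2 : Tendsto (fun k => -2 * Real.log (F (nn k) ω)) atTop
          (nhds (-2 * Real.log (flim ω))) := hlogc.const_mul (-2)
      have h3 := ENNReal.tendsto_ofReal h2
      have hval : h0 ω = ENNReal.ofReal (-2 * Real.log (flim ω)) := by rw [hh0]; simp [hle]
      rw [hval,
        show (fun k => ENNReal.ofReal (hN (nn k) ω)) =
          fun k => ENNReal.ofReal (-2 * Real.log (F (nn k) ω)) from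
          funext fun k => by rw [hlog]]
      exact h3
  -- assemble
  refine ⟨h0, fun k => hN (nn k), hh0_meas, ?_, hconv, ?_⟩
  · intro k
    exact hCmono (hnn_ge_k k) (hNC (nn k))
  · intro hB
    suffices hPT : P {ω | flim ω ≤ 0} = 0 by
      filter_upwards [measure_eq_zero_iff_ae_notMem.mp hPT] with ω hω
      have hω' : ¬ flim ω ≤ 0 := hω
      have : h0 ω = ENNReal.ofReal (-2 * Real.log (flim ω)) := by rw [hh0]; simp [hω']
      rw [this]; exact ENNReal.ofReal_lt_top
    by_contra hPT
    have hhalfpos : 0 < P {ω | flim ω ≤ 0} / 2 := ENNReal.half_pos hPT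
    obtain ⟨ℓ, hℓ⟩ := (hB.eventually_lt_const hhalfpos).exists
    set E : ℕ → Set Ω := fun K => {ω | flim ω ≤ 0} ∩ ⋂ k ∈ Ici K, {ω | ℓ < hN (nn k) ω} with hE
    have hEmono : Monotone E := by
      intro K K' hKK' ω hω
      obtain ⟨hωT, hωI⟩ := hω
      refine ⟨hωT, ?_⟩
      simp only [mem_iInter, mem_Ici] at hωI ⊢
      intro k hk
      exact hωI k (le_trans hKK' hk)
    have hTsub : P {ω | flim ω ≤ 0} ≤ P (⋃ K, E K) := by
      apply measure_mono_ae
      filter_upwards [hflim_tendsto] with ω hω hωT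
      have hd := hdiv ω hω hωT
      obtain ⟨K, hK⟩ := eventually_atTop.mp (hd.eventually_gt_atTop ℓ)
      refine mem_iUnion.mpr ⟨K, hωT, ?_⟩
      simp only [mem_iInter, mem_Ici]
      intro k hk
      exact hK k hk
    have htendE := tendsto_measure_iUnion_atTop (μ := P) hEmono
    have hlt : P {ω | flim ω ≤ 0} / 2 < P (⋃ K, E K) :=
      lt_of_lt_of_le (ENNReal.half_lt_self hPT (measure_ne_top P _)) hTsub
    obtain ⟨K, hKgt⟩ := (htendE.eventually_const_lt hlt).exists
    have hEK : P (E K) ≤ P {ω | ℓ < hN (nn K) ω} := by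
      apply measure_mono
      rintro ω ⟨-, hωI⟩
      simp only [mem_iInter, mem_Ici] at hωI
      exact hωI K le_rfl
    have hmem : hN (nn K) ∈ convexHull ℝ (range g) := hCrange _ (hNC (nn K))
    have hle_sup : P {ω | ℓ < hN (nn K) ω} ≤
        ⨆ b ∈ convexHull ℝ (range g), P {ω | ℓ < b ω} :=
      le_biSup (fun b => P {ω | ℓ < b ω}) hmem
    have : P {ω | flim ω ≤ 0} / 2 < P {ω | flim ω ≤ 0} / 2 :=
      lt_trans (lt_of_lt_of_le (lt_of_lt_of_le hKgt hEK) hle_sup) hℓ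
    exact lt_irrefl _ this
end

section
/- Let Ω = (0,1] with the Borel σ-field and Lebesgue measure P, and for n = 2^{m−1} + k − 1 with m ∈ ℕ (m ≥ 1) and 1 ≤ k ≤ 2^{m−1}, define f_n = (m − 1)·2^{m−1}·1_{((k−1)/2^{m−1}, k/2^{m−1}]}. Then (f_n)_{n∈ℕ} converges to 0 in probability, yet for every nonnegative a.e.-finite measurable function f on Ω there exists a sequence (h_n) of forward convex combinations of (f_n) converging to f in probability. -/
open MeasureTheory Filter Set
open scoped ENNReal NNReal Topology


private lemma clamp_dist {a b M : ℝ} (hb0 : 0 ≤ b) (hbM : b ≤ M) :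
    |b - max 0 (min a M)| ≤ |b - a| := by
  rcases le_total a 0 with h | h
  · have he : max 0 (min a M) = 0 := by
      rw [max_eq_left]; exact (min_le_left a M).trans h
    rw [he, abs_of_nonneg (by linarith), abs_of_nonneg (by linarith)]; linarith
  rcases le_total M a with h2 | h2
  · have he : max 0 (min a M) = M := by rw [min_eq_right h2, max_eq_right (hb0.trans hbM)]
    rw [he, abs_of_nonpos (by linarith), abs_of_nonpos (by linarith)]; linarith
  · have he : max 0 (min a M) = a := by rw [min_eq_left h2, max_eq_right h]
    rw [he]

private lemma mem_dyadic_iff {j k : ℕ} (hk : 1 ≤ k) {x : ℝ} :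
    x ∈ Ioc (((k : ℝ) - 1) / 2 ^ j) ((k : ℝ) / 2 ^ j) ↔ ⌈x * 2 ^ j⌉₊ = k := by
  have h2 : (0:ℝ) < 2 ^ j := by positivity
  rw [Nat.ceil_eq_iff (by omega), mem_Ioc, div_lt_iff₀ h2, le_div_iff₀ h2]
  constructor
  · rintro ⟨h1, h2'⟩
    refine ⟨?_, h2'⟩
    rw [Nat.cast_sub hk]; push_cast; linarith
  · rintro ⟨h1, h2'⟩
    rw [Nat.cast_sub hk] at h1; push_cast at h1
    exact ⟨by linarith, h2'⟩

private lemma dyadic_k_mem {j : ℕ} {x : ℝ} (hx : x ∈ Ioc (0:ℝ) 1) :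
    1 ≤ ⌈x * 2 ^ j⌉₊ ∧ ⌈x * 2 ^ j⌉₊ ≤ 2 ^ j := by
  have h2 : (0:ℝ) < 2 ^ j := by positivity
  constructor
  · exact Nat.one_le_ceil_iff.2 (by nlinarith [hx.1])
  · rw [Nat.ceil_le]; push_cast; nlinarith [hx.2, hx.1]

private lemma core (f : ℕ → ℝ → ℝ)
    (hf : ∀ j k : ℕ, 1 ≤ k → k ≤ 2 ^ j →
      f (2 ^ j + k - 1) =
        Set.indicator (Set.Ioc (((k : ℝ) - 1) / 2 ^ j) ((k : ℝ) / 2 ^ j))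
          (fun _ => (j : ℝ) * 2 ^ j))
    (g : ℝ → ℝ) (hg : Measurable g)
    (hg0 : 0 ≤ᵐ[volume.restrict (Set.Ioc (0 : ℝ) 1)] g)
    (N : ℕ) (δ : ℝ) (hδ : 0 < δ) :
    ∃ h : ℝ → ℝ, h ∈ convexHull ℝ {φ : ℝ → ℝ | ∃ k, N ≤ k ∧ φ = f k} ∧
      volume.restrict (Set.Ioc (0 : ℝ) 1) {x | δ ≤ dist (h x) (g x)} ≤ ENNReal.ofReal δ := by
  set μ := volume.restrict (Set.Ioc (0 : ℝ) 1) with hμ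
  have hμfin : μ Set.univ ≠ ⊤ := by
    rw [hμ, Measure.restrict_apply_univ, Real.volume_Ioc]
    exact ENNReal.ofReal_ne_top
  -- Step 1 : truncation level M
  obtain ⟨M, hM1, hMmeas⟩ : ∃ M : ℕ, 1 ≤ M ∧ μ {x | (M : ℝ) < g x} < ENNReal.ofReal (δ/4) := by
    have hanti : Antitone (fun n : ℕ => {x : ℝ | (n:ℝ) < g x}) := by
      intro a b hab x hx
      simp only [mem_setOf_eq] at hx ⊢
      exact lt_of_le_of_lt (by exact_mod_cast hab) hx
    have hmeas : ∀ n : ℕ, NullMeasurableSet {x : ℝ | (n:ℝ) < g x} μ := fun n =>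
      (measurableSet_lt measurable_const hg).nullMeasurableSet
    have hempty : (⋂ n : ℕ, {x : ℝ | (n:ℝ) < g x}) = (∅ : Set ℝ) := by
      ext x
      simp only [mem_iInter, mem_setOf_eq, mem_empty_iff_false, iff_false, not_forall, not_lt]
      obtain ⟨n, hn⟩ := exists_nat_gt (g x)
      exact ⟨n, hn.le⟩
    have htend := MeasureTheory.tendsto_measure_iInter_atTop hmeas hanti
      ⟨0, ne_top_of_le_ne_top hμfin (measure_mono (subset_univ _))⟩
    rw [hempty, measure_empty] at htend
    have hev := htend.eventually_lt_const (ENNReal.ofReal_pos.2 (show (0:ℝ) < δ/4 by linarith))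
    obtain ⟨M₀, hM₀⟩ := hev.exists_forall_of_atTop
    exact ⟨max M₀ 1, le_max_right _ _, hM₀ _ (le_max_left _ _)⟩
  -- Step 2 : truncated function
  set φ : ℝ → ℝ := (Set.Ioc (0:ℝ) 1).indicator (fun x => max 0 (min (g x) M)) with hφdef
  have hφmeas : Measurable φ :=
    (measurable_const.max (hg.min measurable_const)).indicator measurableSet_Ioc
  have hφ0 : ∀ x, 0 ≤ φ x := by
    intro x
    by_cases hx : x ∈ Set.Ioc (0:ℝ) 1
    · rw [hφdef, Set.indicator_of_mem hx]; exact le_max_left _ _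
    · rw [hφdef, Set.indicator_of_notMem hx]
  have hφM : ∀ x, φ x ≤ M := by
    intro x
    by_cases hx : x ∈ Set.Ioc (0:ℝ) 1
    · rw [hφdef, Set.indicator_of_mem hx]
      exact max_le (by exact_mod_cast Nat.zero_le M) (min_le_right _ _)
    · rw [hφdef, Set.indicator_of_notMem hx]; exact_mod_cast Nat.zero_le M
  have hφint : Integrable φ volume := by
    refine Integrable.mono' (g := (Set.Ioc (0:ℝ) 1).indicator fun _ => (M:ℝ)) ?_
      hφmeas.aestronglyMeasurable ?_
    · rw [integrable_indicator_iff measurableSet_Ioc]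
      exact integrableOn_const (by rw [Real.volume_Ioc]; exact ENNReal.ofReal_ne_top)
    · filter_upwards with x
      rw [Real.norm_eq_abs, abs_of_nonneg (hφ0 x)]
      by_cases hx : x ∈ Set.Ioc (0:ℝ) 1
      · rw [Set.indicator_of_mem hx]; exact hφM x
      · rw [Set.indicator_of_notMem hx, hφdef, Set.indicator_of_notMem hx]
  -- Step 3 : continuous approximation
  have hε0 : (ENNReal.ofReal (δ/2) * ENNReal.ofReal (δ/4)) ≠ 0 := by
    refine mul_ne_zero ?_ ?_ <;> simp only [ne_eq, ENNReal.ofReal_eq_zero, not_le] <;> linarith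
  obtain ⟨c, hc_supp, hc_int, hc_cont, _⟩ :=
    hφint.exists_hasCompactSupport_lintegral_sub_le hε0
  -- Step 4 : clamped continuous approximation
  set c' : ℝ → ℝ := fun x => max 0 (min (c x) M) with hc'def
  have hc'_cont : Continuous c' := continuous_const.max (hc_cont.min continuous_const)
  have hc'_supp : HasCompactSupport c' := by
    have he : c' = (fun y : ℝ => max 0 (min y M)) ∘ c := rfl
    rw [he]
    exact hc_supp.comp_left (by simp)
  have hc'0 : ∀ x, 0 ≤ c' x := fun x => le_max_left _ _
  have hc'M : ∀ x, c' x ≤ M :=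
    fun x => max_le (by exact_mod_cast Nat.zero_le M) (min_le_right _ _)
  obtain ⟨δ', hδ'pos, hδ'⟩ := Metric.uniformContinuous_iff.1
    (hc'_supp.uniformContinuous_of_continuous hc'_cont) (δ/2) (by linarith)
  -- Step 5 : pick the dyadic level j
  obtain ⟨j₀, hj₀⟩ := exists_pow_lt_of_lt_one
    (show (0:ℝ) < min δ' (δ/4) by exact lt_min hδ'pos (by linarith))
    (show (1:ℝ)/2 < 1 by norm_num)
  set j := max (max N M) (max j₀ 1) with hjdef
  have hj1 : 1 ≤ j := le_trans (le_max_right j₀ 1) (le_max_right _ _)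
  have hjM : M ≤ j := le_trans (le_max_right N M) (le_max_left _ _)
  have hjN : N ≤ 2 ^ j :=
    le_trans (le_trans (le_max_left N M) (le_max_left _ _)) j.lt_two_pow_self.le
  have hsmall : (1:ℝ)/2^j < min δ' (δ/4) := by
    refine lt_of_le_of_lt ?_ hj₀
    rw [div_pow, one_pow]
    rw [div_le_div_iff₀ (by positivity) (by positivity)]
    have : (2:ℝ)^j₀ ≤ 2^j := by
      apply pow_le_pow_right₀ (by norm_num)
      exact le_trans (le_max_left j₀ 1) (le_max_right _ _)
    linarith
  have h2jpos : (0:ℝ) < 2^j := by positivity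
  have hjRpos : (0:ℝ) < (j:ℝ) * 2^j := by
    have h1 : (1:ℝ) ≤ (j:ℝ) := by exact_mod_cast hj1
    nlinarith
  -- Step 6 : weights
  set lam : ℕ → ℝ := fun k => c' ((k:ℝ)/2^j) / ((j:ℝ)*2^j) with hlamdef
  set T : Finset ℕ := Finset.Icc 1 (2^j) with hTdef
  set lam0 : ℝ := 1 - ∑ k ∈ T, lam k with hlam0def
  set w : ℕ → ℝ := fun k => lam k + if k = 1 then lam0 else 0 with hwdef
  have hlam_nonneg : ∀ k, 0 ≤ lam k := fun k => div_nonneg (hc'0 _) hjRpos.le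
  have hlam_le : ∀ k, lam k ≤ 1/2^j := by
    intro k
    rw [hlamdef, div_le_div_iff₀ hjRpos h2jpos]
    have h1 : c' ((k:ℝ)/2^j) ≤ M := hc'M _
    have h2 : (M:ℝ) ≤ j := by exact_mod_cast hjM
    nlinarith
  have hsum_lam_le : ∑ k ∈ T, lam k ≤ 1 := by
    calc ∑ k ∈ T, lam k ≤ ∑ _k ∈ T, 1/2^j := Finset.sum_le_sum fun k _ => hlam_le k
    _ = ((2^j : ℕ) : ℝ) * (1/2^j) := by
        rw [Finset.sum_const, hTdef, Nat.card_Icc]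
        simp [nsmul_eq_mul]
    _ = 1 := by push_cast; field_simp
  have hlam0_nonneg : 0 ≤ lam0 := by rw [hlam0def]; linarith
  have hw_nonneg : ∀ k ∈ T, 0 ≤ w k := by
    intro k _
    rw [hwdef]
    dsimp only
    split <;> [linarith [hlam_nonneg k]; simpa using hlam_nonneg k]
  have h1T : (1:ℕ) ∈ T := by
    rw [hTdef, Finset.mem_Icc]
    exact ⟨le_refl 1, Nat.one_le_two_pow⟩
  have hsum_w : ∑ k ∈ T, w k = 1 := by
    rw [hwdef]
    rw [Finset.sum_add_distrib, Finset.sum_ite_eq' T 1 (fun _ => lam0), if_pos h1T, hlam0def]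
    ring
  set h : ℝ → ℝ := ∑ k ∈ T, w k • f (2^j + k - 1) with hhdef
  have hmem : h ∈ convexHull ℝ {φ : ℝ → ℝ | ∃ k, N ≤ k ∧ φ = f k} := by
    have hcm := Finset.centerMass_mem_convexHull (s := {φ : ℝ → ℝ | ∃ k, N ≤ k ∧ φ = f k}) T
      hw_nonneg (by rw [hsum_w]; norm_num) (z := fun k => f (2^j + k - 1))
      (fun k hk => ⟨2^j + k - 1, by
        have hk1 := (Finset.mem_Icc.1 (hTdef ▸ hk)).1
        omega, rfl⟩)
    rwa [Finset.centerMass, hsum_w, inv_one, one_smul] at hcm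
  -- Step 7 : pointwise evaluation
  have heval : ∀ x ∈ Ioc (0:ℝ) 1, h x = w ⌈x * 2^j⌉₊ * ((j:ℝ) * 2^j) := by
    intro x hx
    obtain ⟨hk1, hk2⟩ := dyadic_k_mem (j := j) hx
    rw [hhdef, Finset.sum_apply]
    rw [Finset.sum_eq_single (⌈x * 2^j⌉₊)]
    · rw [Pi.smul_apply, hf j _ hk1 hk2, smul_eq_mul,
        indicator_of_mem ((mem_dyadic_iff hk1).2 rfl)]
    · intro k hk hne
      have hkIcc := Finset.mem_Icc.1 (hTdef ▸ hk)
      rw [Pi.smul_apply, hf j k hkIcc.1 hkIcc.2, smul_eq_mul,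
        indicator_of_notMem, mul_zero]
      rw [mem_dyadic_iff hkIcc.1]
      exact fun hc => hne hc.symm
    · intro hnot
      exact absurd (hTdef ▸ Finset.mem_Icc.2 ⟨hk1, hk2⟩) hnot
  -- Step 8 : error set inclusion
  refine ⟨h, hmem, ?_⟩
  have key : {x : ℝ | δ ≤ dist (h x) (g x)} ⊆
      (Ioc (0:ℝ) (1/2^j)) ∪ {x : ℝ | (M:ℝ) < g x}
      ∪ {x : ℝ | ENNReal.ofReal (δ/2) ≤ (‖φ x - c x‖₊ : ℝ≥0∞)}
      ∪ {x : ℝ | ¬ 0 ≤ g x} ∪ (Ioc (0:ℝ) 1)ᶜ := by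
    intro x hx
    by_contra hcon
    simp only [mem_union, mem_setOf_eq, mem_compl_iff, not_or, not_not] at hcon
    obtain ⟨⟨⟨⟨hE1, hE2⟩, hE3⟩, hE4⟩, hx01⟩ := hcon
    have hx01' : x ∈ Ioc (0:ℝ) 1 := hx01
    have hgx0 : 0 ≤ g x := hE4
    have hgxM : g x ≤ M := not_lt.1 hE2
    have hφx : φ x = g x := by
      rw [hφdef, Set.indicator_of_mem hx01', min_eq_left hgxM, max_eq_right hgx0]
    have hcx : |φ x - c x| < δ/2 := by
      rw [← Real.norm_eq_abs]
      have := not_le.1 hE3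
      rw [show ((‖φ x - c x‖₊ : ℝ≥0∞)) = ENNReal.ofReal ‖φ x - c x‖ from (ofReal_norm _).symm] at this
      exact lt_of_not_ge fun hcon2 =>
        absurd (ENNReal.ofReal_le_ofReal hcon2) (not_le.2 this)
    set k₀ := ⌈x * 2^j⌉₊ with hk₀def
    obtain ⟨hk1, hk2⟩ := dyadic_k_mem (j := j) hx01'
    have hxI : x ∈ Ioc (((k₀ : ℝ) - 1) / 2 ^ j) ((k₀ : ℝ) / 2 ^ j) :=
      (mem_dyadic_iff hk1).2 rfl
    have hk₀ne1 : k₀ ≠ 1 := by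
      intro hone
      apply hE1
      refine ⟨hx01'.1, ?_⟩
      have := hxI.2
      rw [hone] at this
      push_cast at this
      linarith
    have hhx : h x = c' ((k₀:ℝ)/2^j) := by
      rw [heval x hx01', ← hk₀def, hwdef]
      dsimp only
      rw [if_neg hk₀ne1, add_zero, hlamdef]
      field_simp
    have hclose1 : |c' ((k₀:ℝ)/2^j) - c' x| < δ/2 := by
      have hd : dist ((k₀:ℝ)/2^j) x < δ' := by
        rw [Real.dist_eq, abs_of_nonneg (by linarith [hxI.2])]
        have h1 : ((k₀:ℝ) - 1) / 2 ^ j < x := hxI.1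
        rw [sub_div] at h1
        have : (1:ℝ)/2^j < δ' := lt_of_lt_of_le hsmall (min_le_left _ _)
        linarith
      have := hδ' hd
      rwa [Real.dist_eq] at this
    have hclose2 : |c' x - g x| < δ/2 := by
      have hcl : |g x - c' x| ≤ |g x - c x| := clamp_dist hgx0 hgxM
      rw [abs_sub_comm]
      calc |g x - c' x| ≤ |g x - c x| := hcl
      _ = |φ x - c x| := by rw [hφx]
      _ < δ/2 := hcx
    have : dist (h x) (g x) < δ := by
      rw [Real.dist_eq, hhx]
      calc |c' ((k₀:ℝ)/2^j) - g x| ≤ |c' ((k₀:ℝ)/2^j) - c' x| + |c' x - g x| :=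
        abs_sub_le _ _ _
      _ < δ/2 + δ/2 := add_lt_add hclose1 hclose2
      _ = δ := by ring
    exact absurd hx (not_le.2 (by simpa using this))
  -- Step 9 : measure estimate
  have hE1m : μ (Ioc (0:ℝ) (1/2^j)) ≤ ENNReal.ofReal (δ/4) := by
    rw [hμ, Measure.restrict_apply measurableSet_Ioc]
    refine le_trans (measure_mono (inter_subset_left)) ?_
    rw [Real.volume_Ioc]
    apply ENNReal.ofReal_le_ofReal
    have := lt_of_lt_of_le hsmall (min_le_right _ _)
    linarith
  have hE3m : μ {x : ℝ | ENNReal.ofReal (δ/2) ≤ (‖φ x - c x‖₊ : ℝ≥0∞)}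
      ≤ ENNReal.ofReal (δ/4) := by
    have hFmeas : AEMeasurable (fun x => (‖φ x - c x‖₊ : ℝ≥0∞)) μ :=
      ((hφmeas.sub hc_cont.measurable).nnnorm.coe_nnreal_ennreal).aemeasurable
    have hne0 : ENNReal.ofReal (δ/2) ≠ 0 := by
      simp only [ne_eq, ENNReal.ofReal_eq_zero, not_le]; linarith
    calc μ {x : ℝ | ENNReal.ofReal (δ/2) ≤ (‖φ x - c x‖₊ : ℝ≥0∞)}
        ≤ (∫⁻ x, (‖φ x - c x‖₊ : ℝ≥0∞) ∂μ) / ENNReal.ofReal (δ/2) :=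
          meas_ge_le_lintegral_div hFmeas hne0 ENNReal.ofReal_ne_top
      _ ≤ (∫⁻ x, (‖φ x - c x‖₊ : ℝ≥0∞) ∂volume) / ENNReal.ofReal (δ/2) := by
          apply ENNReal.div_le_div_right
          exact lintegral_mono' Measure.restrict_le_self le_rfl
      _ ≤ (ENNReal.ofReal (δ/2) * ENNReal.ofReal (δ/4)) / ENNReal.ofReal (δ/2) :=
          ENNReal.div_le_div_right hc_int _
      _ = ENNReal.ofReal (δ/4) := by
          rw [mul_comm, mul_div_assoc,
            ENNReal.div_self (by simp only [ne_eq, ENNReal.ofReal_eq_zero, not_le]; linarith)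
              ENNReal.ofReal_ne_top, mul_one]
  have hE4m : μ {x : ℝ | ¬ 0 ≤ g x} = 0 := by
    have hae : ∀ᵐ x ∂μ, 0 ≤ g x := by
      filter_upwards [hg0] with x hx using hx
    simpa [ae_iff] using hae
  have hE5m : μ ((Ioc (0:ℝ) 1)ᶜ) = 0 := by
    rw [hμ, Measure.restrict_apply measurableSet_Ioc.compl, compl_inter_self]
    exact measure_empty
  refine le_trans (measure_mono key) ?_
  refine le_trans (measure_union_le _ _) ?_
  rw [hE5m, add_zero]
  refine le_trans (measure_union_le _ _) ?_
  rw [hE4m, add_zero]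
  refine le_trans (measure_union_le _ _) ?_
  refine le_trans (add_le_add (measure_union_le _ _) hE3m) ?_
  refine le_trans (add_le_add (add_le_add hE1m hMmeas.le) le_rfl) ?_
  rw [← ENNReal.ofReal_add (by linarith) (by linarith),
    ← ENNReal.ofReal_add (by linarith) (by linarith)]
  exact ENNReal.ofReal_le_ofReal (by linarith)

theorem stmt11 (f : ℕ → ℝ → ℝ)
    (hf : ∀ m k : ℕ, 1 ≤ m → 1 ≤ k → k ≤ 2 ^ (m - 1) →
      f (2 ^ (m - 1) + k - 1) =
        Set.indicator (Set.Ioc (((k : ℝ) - 1) / 2 ^ (m - 1)) ((k : ℝ) / 2 ^ (m - 1)))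
          (fun _ => ((m : ℝ) - 1) * 2 ^ (m - 1))) :
    TendstoInMeasure (volume.restrict (Set.Ioc (0 : ℝ) 1)) f atTop (fun _ => (0 : ℝ)) ∧
    ∀ g : ℝ → ℝ, Measurable g → 0 ≤ᵐ[volume.restrict (Set.Ioc (0 : ℝ) 1)] g →
      ∃ h : ℕ → ℝ → ℝ, FwdConvexCombos f h ∧
        TendstoInMeasure (volume.restrict (Set.Ioc (0 : ℝ) 1)) h atTop g := by
  have hf' : ∀ j k : ℕ, 1 ≤ k → k ≤ 2 ^ j →
      f (2 ^ j + k - 1) =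
        Set.indicator (Set.Ioc (((k : ℝ) - 1) / 2 ^ j) ((k : ℝ) / 2 ^ j))
          (fun _ => (j : ℝ) * 2 ^ j) := by
    intro j k hk1 hk2
    have h := hf (j + 1) k (by omega) hk1 (by simpa using hk2)
    simp only [Nat.add_sub_cancel] at h
    rw [h]
    congr 1
    funext y
    push_cast
    ring
  constructor
  · -- convergence in measure to 0
    rw [tendstoInMeasure_iff_dist]
    intro ε hε
    have hb : ∀ n : ℕ, 1 ≤ n →
        (volume.restrict (Set.Ioc (0:ℝ) 1)) {x | ε ≤ dist (f n x) ((fun _ => (0:ℝ)) x)}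
          ≤ ENNReal.ofReal (2 / n) := by
      intro n hn
      set j := Nat.log 2 n with hj
      have h1 : 2 ^ j ≤ n := Nat.pow_log_le_self 2 (by omega)
      have h2 : n < 2 ^ (j + 1) := Nat.lt_pow_succ_log_self (by norm_num) n
      set k := n - 2 ^ j + 1 with hk
      have hk1 : 1 ≤ k := by omega
      have hk2 : k ≤ 2 ^ j := by
        have hpow : 2 ^ (j+1) = 2 ^ j + 2 ^ j := by ring
        omega
      have hidx : 2 ^ j + k - 1 = n := by omega
      have hfn := hf' j k hk1 hk2
      rw [hidx] at hfn
      have hsub : {x : ℝ | ε ≤ dist (f n x) ((fun _ => (0:ℝ)) x)}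
          ⊆ Ioc (((k:ℝ)-1)/2^j) ((k:ℝ)/2^j) := by
        intro x hx
        by_contra hnot
        rw [mem_setOf_eq, hfn, indicator_of_notMem hnot] at hx
        simp only [dist_zero_right, norm_zero] at hx
        linarith
      refine le_trans (measure_mono hsub) ?_
      rw [Measure.restrict_apply measurableSet_Ioc]
      refine le_trans (measure_mono inter_subset_left) ?_
      rw [Real.volume_Ioc]
      apply ENNReal.ofReal_le_ofReal
      have h2' : (n:ℝ) < 2 ^ (j+1) := by exact_mod_cast h2
      have hnpos : (0:ℝ) < n := by exact_mod_cast hn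
      rw [pow_succ] at h2'
      have heq : ((k:ℝ))/2^j - ((k:ℝ)-1)/2^j = 1/2^j := by
        field_simp; ring
      rw [heq, div_le_div_iff₀ (by positivity) hnpos]
      nlinarith
    have htb : Tendsto (fun n : ℕ => ENNReal.ofReal (2 / n)) atTop (𝓝 0) := by
      have h0 := ENNReal.tendsto_ofReal (tendsto_const_div_atTop_nhds_zero_nat 2)
      simpa using h0
    refine tendsto_of_tendsto_of_tendsto_of_le_of_le' tendsto_const_nhds htb
      (Eventually.of_forall fun n => zero_le) (eventually_atTop.2 ⟨1, hb⟩)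
  · -- convex combinations converge to any nonnegative g
    intro g hg hg0
    choose h hmem hbound using fun n : ℕ =>
      core f hf' g hg hg0 n (1/((n:ℝ)+1)) (by positivity)
    refine ⟨h, hmem, ?_⟩
    rw [tendstoInMeasure_iff_dist]
    intro ε hε
    obtain ⟨N₀, hN₀⟩ := exists_nat_one_div_lt (ε := ε) hε
    have hub : ∀ n ≥ N₀,
        (volume.restrict (Set.Ioc (0:ℝ) 1)) {x | ε ≤ dist (h n x) (g x)}
          ≤ ENNReal.ofReal (1/((n:ℝ)+1)) := by
      intro n hn
      refine le_trans (measure_mono ?_) (hbound n)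
      intro x hx
      rw [mem_setOf_eq] at hx ⊢
      refine le_trans ?_ hx
      calc (1:ℝ)/((n:ℝ)+1) ≤ 1/((N₀:ℝ)+1) := by
            apply one_div_le_one_div_of_le (by positivity)
            have : (N₀:ℝ) ≤ n := by exact_mod_cast hn
            linarith
      _ ≤ ε := hN₀.le
    have htb : Tendsto (fun n : ℕ => ENNReal.ofReal (1/((n:ℝ)+1))) atTop (𝓝 0) := by
      have h0 := ENNReal.tendsto_ofReal tendsto_one_div_add_atTop_nhds_zero_nat
      simpa using h0
    refine tendsto_of_tendsto_of_tendsto_of_le_of_le' tendsto_const_nhds htb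
      (Eventually.of_forall fun n => zero_le) (eventually_atTop.2 ⟨N₀, hub⟩)
end

section
/- Let (Ω, 𝓕, P) be a probability space carrying a sequence (f_n)_{n∈ℕ} of independent random variables with identical distribution P(f_n = 0) = P(f_n = 2) = 1/2. Then every sequence (h_n) of forward convex combinations of (f_n) that converges P-a.e. to a measurable function g : Ω → [0,∞] satisfies g = 1 P-a.e.; moreover there exists a sequence of forward convex combinations of (f_n) converging P-a.e. to the constant 1. In particular, the set of all a.e.-limits of sequences of forward convex combinations of (f_n) is exactly {1}. -/
open MeasureTheory Filter Set

namespace Stmt12Aux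

variable {Ω : Type*} [MeasurableSpace Ω] {P : Measure Ω} [IsProbabilityMeasure P]
  {f : ℕ → Ω → ℝ}

lemma integrable_of_ae_bound {X : Ω → ℝ} (hm : AEStronglyMeasurable X P) {C : ℝ}
    (h : ∀ᵐ ω ∂P, |X ω| ≤ C) : Integrable X P :=
  Integrable.mono' (integrable_const C) hm (by simpa [Real.norm_eq_abs] using h)

lemma ae_zero_or_two (hfmeas : ∀ n, Measurable (f n))
    (hdist : ∀ n, P {ω | f n ω = 0} = 1 / 2 ∧ P {ω | f n ω = 2} = 1 / 2) (k : ℕ) :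
    ∀ᵐ ω ∂P, f k ω = 0 ∨ f k ω = 2 := by
  have hA : MeasurableSet {ω | f k ω = 0} := hfmeas k (measurableSet_singleton 0)
  have hB : MeasurableSet {ω | f k ω = 2} := hfmeas k (measurableSet_singleton 2)
  have hdisj : Disjoint {ω | f k ω = 0} {ω | f k ω = 2} := by
    rw [Set.disjoint_left]
    intro ω h0 h2
    simp only [mem_setOf_eq] at h0 h2
    rw [h0] at h2; norm_num at h2
  have hunion : P ({ω | f k ω = 0} ∪ {ω | f k ω = 2}) = 1 := by
    rw [measure_union hdisj hB, (hdist k).1, (hdist k).2]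
    norm_num
    exact ENNReal.inv_two_add_inv_two
  have hcompl : P (({ω | f k ω = 0} ∪ {ω | f k ω = 2})ᶜ) = 0 :=
    (prob_compl_eq_zero_iff (hA.union hB)).2 hunion
  rw [ae_iff]
  convert hcompl using 2
  ext ω; simp




lemma integrable_f (hfmeas : ∀ n, Measurable (f n))
    (hdist : ∀ n, P {ω | f n ω = 0} = 1 / 2 ∧ P {ω | f n ω = 2} = 1 / 2) (k : ℕ) :
    Integrable (f k) P := by
  apply integrable_of_ae_bound (hfmeas k).aestronglyMeasurable (C := 2)
  filter_upwards [ae_zero_or_two hfmeas hdist k] with ω hω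
  rcases hω with h | h <;> rw [h] <;> norm_num

lemma integral_f (hfmeas : ∀ n, Measurable (f n))
    (hdist : ∀ n, P {ω | f n ω = 0} = 1 / 2 ∧ P {ω | f n ω = 2} = 1 / 2) (k : ℕ) :
    ∫ ω, f k ω ∂P = 1 := by
  have hind : f k =ᵐ[P] Set.indicator (f k ⁻¹' {2}) (fun _ => (2 : ℝ)) := by
    filter_upwards [ae_zero_or_two hfmeas hdist k] with ω hω
    rcases hω with h | h
    · rw [h, Set.indicator_of_notMem]
      simp only [Set.mem_preimage, Set.mem_singleton_iff, h]
      norm_num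
    · rw [h, Set.indicator_of_mem]
      exact h
  have hset : P (f k ⁻¹' {2}) = 1 / 2 := (hdist k).2
  rw [integral_congr_ae hind,
    integral_indicator_const (2 : ℝ) (hfmeas k (measurableSet_singleton 2)), measureReal_def, hset]
  simp [ENNReal.toReal_div]

lemma integrable_mulf (hfmeas : ∀ n, Measurable (f n))
    (hdist : ∀ n, P {ω | f n ω = 0} = 1 / 2 ∧ P {ω | f n ω = 2} = 1 / 2) (j k : ℕ) :
    Integrable (fun ω => f j ω * f k ω) P := by
  apply integrable_of_ae_bound ((hfmeas j).mul (hfmeas k)).aestronglyMeasurable (C := 4)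
  filter_upwards [ae_zero_or_two hfmeas hdist j, ae_zero_or_two hfmeas hdist k] with ω hj hk
  rcases hj with h | h <;> rcases hk with h' | h' <;> rw [Pi.mul_apply, h, h'] <;> norm_num

lemma integral_mulf (hfmeas : ∀ n, Measurable (f n))
    (hindep : ProbabilityTheory.iIndepFun f P)
    (hdist : ∀ n, P {ω | f n ω = 0} = 1 / 2 ∧ P {ω | f n ω = 2} = 1 / 2) (j k : ℕ) :
    ∫ ω, f j ω * f k ω ∂P = if j = k then 2 else 1 := by
  by_cases hjk : j = k
  · subst hjk
    simp only [if_pos rfl]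
    have heq : (fun ω => f j ω * f j ω) =ᵐ[P] fun ω => 2 * f j ω := by
      filter_upwards [ae_zero_or_two hfmeas hdist j] with ω hω
      rcases hω with h | h <;> rw [h] <;> ring
    rw [integral_congr_ae heq, integral_const_mul, integral_f hfmeas hdist]
    norm_num
  · simp only [if_neg hjk]
    have h1 := (hindep.indepFun hjk).integral_mul_eq_mul_integral (hfmeas j).aestronglyMeasurable
      (hfmeas k).aestronglyMeasurable
    have h3 : integral P (f j) = 1 := integral_f hfmeas hdist j
    have h4 : integral P (f k) = 1 := integral_f hfmeas hdist k
    calc ∫ ω, f j ω * f k ω ∂P = integral P (f j * f k) := rfl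
      _ = integral P (f j) * integral P (f k) := h1
      _ = 1 := by rw [h3, h4]; norm_num

lemma rep_of_mem {hh : Ω → ℝ} {n : ℕ}
    (hn : hh ∈ convexHull ℝ {g : Ω → ℝ | ∃ k, n ≤ k ∧ g = f k}) :
    ∃ (s : Finset ℕ) (u : ℕ → ℝ), (∀ k ∈ s, 0 ≤ u k) ∧ (∑ k ∈ s, u k = 1) ∧
      (∀ k ∈ s, n ≤ k) ∧ ∀ ω, hh ω = ∑ k ∈ s, u k * f k ω := by
  classical
  rw [convexHull_eq] at hn
  obtain ⟨ι, t, w, z, hw0, hw1, hz, hcm⟩ := hn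
  have hz' : ∀ i ∈ t, ∃ k, n ≤ k ∧ z i = f k := hz
  choose! κ hκn hκf using hz'
  refine ⟨t.image κ, fun k => ∑ i ∈ t.filter (fun i => κ i = k), w i, ?_, ?_, ?_, ?_⟩
  · intro k _
    exact Finset.sum_nonneg fun i hi => hw0 i (Finset.mem_filter.1 hi).1
  · rw [← hw1]
    exact Finset.sum_fiberwise_of_maps_to (fun i hi => Finset.mem_image_of_mem κ hi) w
  · intro k hk
    obtain ⟨i, hi, rfl⟩ := Finset.mem_image.1 hk
    exact hκn i hi
  · intro ω
    have h1 : hh ω = ∑ i ∈ t, w i * z i ω := by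
      rw [← hcm, Finset.centerMass_eq_of_sum_1 _ _ hw1]
      simp [Finset.sum_apply]
    rw [h1]
    have h2 : ∑ i ∈ t, w i * z i ω = ∑ i ∈ t, w i * f (κ i) ω :=
      Finset.sum_congr rfl fun i hi => by rw [hκf i hi]
    rw [h2, ← Finset.sum_fiberwise_of_maps_to
      (fun i hi => Finset.mem_image_of_mem κ hi) (fun i => w i * f (κ i) ω)]
    refine Finset.sum_congr rfl fun k _ => ?_
    rw [Finset.sum_mul]
    refine Finset.sum_congr rfl fun i hi => ?_
    rw [(Finset.mem_filter.1 hi).2]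

lemma integrable_combo (hfmeas : ∀ n, Measurable (f n))
    (hdist : ∀ n, P {ω | f n ω = 0} = 1 / 2 ∧ P {ω | f n ω = 2} = 1 / 2)
    (s : Finset ℕ) (u : ℕ → ℝ) :
    Integrable (fun ω => ∑ k ∈ s, u k * f k ω) P := by
  apply integrable_finset_sum
  intro k _
  exact ((integrable_f hfmeas hdist k).const_mul (u k))

lemma integral_combo (hfmeas : ∀ n, Measurable (f n))
    (hdist : ∀ n, P {ω | f n ω = 0} = 1 / 2 ∧ P {ω | f n ω = 2} = 1 / 2)
    (s : Finset ℕ) (u : ℕ → ℝ) :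
    ∫ ω, ∑ k ∈ s, u k * f k ω ∂P = ∑ k ∈ s, u k := by
  rw [integral_finset_sum _ (fun k _ => (integrable_f hfmeas hdist k).const_mul (u k))]
  refine Finset.sum_congr rfl fun k _ => ?_
  rw [integral_const_mul, integral_f hfmeas hdist, mul_one]

lemma combo_bounds {s : Finset ℕ} {u : ℕ → ℝ} (hu0 : ∀ k ∈ s, 0 ≤ u k)
    (hu1 : ∑ k ∈ s, u k = 1) {ω : Ω} (hω : ∀ k, f k ω = 0 ∨ f k ω = 2) :
    0 ≤ ∑ k ∈ s, u k * f k ω ∧ ∑ k ∈ s, u k * f k ω ≤ 2 := by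
  have hf0 : ∀ k, 0 ≤ f k ω := by
    intro k; rcases hω k with h | h <;> rw [h] <;> norm_num
  have hf2 : ∀ k, f k ω ≤ 2 := by
    intro k; rcases hω k with h | h <;> rw [h] <;> norm_num
  constructor
  · exact Finset.sum_nonneg fun k hk => mul_nonneg (hu0 k hk) (hf0 k)
  · calc ∑ k ∈ s, u k * f k ω ≤ ∑ k ∈ s, u k * 2 :=
          Finset.sum_le_sum fun k hk => mul_le_mul_of_nonneg_left (hf2 k) (hu0 k hk)
      _ = 2 := by rw [← Finset.sum_mul, hu1, one_mul]

lemma integral_combo_mul (hfmeas : ∀ n, Measurable (f n))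
    (hindep : ProbabilityTheory.iIndepFun f P)
    (hdist : ∀ n, P {ω | f n ω = 0} = 1 / 2 ∧ P {ω | f n ω = 2} = 1 / 2)
    (s1 s2 : Finset ℕ) (u1 u2 : ℕ → ℝ) :
    ∫ ω, (∑ k ∈ s1, u1 k * f k ω) * (∑ l ∈ s2, u2 l * f l ω) ∂P =
      ∑ k ∈ s1, ∑ l ∈ s2, u1 k * u2 l * (if k = l then 2 else 1) := by
  have hpt : ∀ ω, (∑ k ∈ s1, u1 k * f k ω) * (∑ l ∈ s2, u2 l * f l ω) =
      ∑ k ∈ s1, ∑ l ∈ s2, u1 k * u2 l * (f k ω * f l ω) := by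
    intro ω
    rw [Finset.sum_mul_sum]
    exact Finset.sum_congr rfl fun k _ => Finset.sum_congr rfl fun l _ => by ring
  have hint : ∀ k l : ℕ, Integrable (fun ω => u1 k * u2 l * (f k ω * f l ω)) P :=
    fun k l => (integrable_mulf hfmeas hdist k l).const_mul _
  calc ∫ ω, (∑ k ∈ s1, u1 k * f k ω) * (∑ l ∈ s2, u2 l * f l ω) ∂P
      = ∫ ω, ∑ k ∈ s1, ∑ l ∈ s2, u1 k * u2 l * (f k ω * f l ω) ∂P := by
        exact integral_congr_ae (Eventually.of_forall hpt)
    _ = ∑ k ∈ s1, ∫ ω, ∑ l ∈ s2, u1 k * u2 l * (f k ω * f l ω) ∂P := by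
        exact integral_finset_sum _ fun k _ => integrable_finset_sum _ fun l _ => hint k l
    _ = ∑ k ∈ s1, ∑ l ∈ s2, ∫ ω, u1 k * u2 l * (f k ω * f l ω) ∂P := by
        exact Finset.sum_congr rfl fun k _ => integral_finset_sum _ fun l _ => hint k l
    _ = ∑ k ∈ s1, ∑ l ∈ s2, u1 k * u2 l * (if k = l then 2 else 1) := by
        refine Finset.sum_congr rfl fun k _ => Finset.sum_congr rfl fun l _ => ?_
        rw [integral_const_mul, integral_mulf hfmeas hindep hdist]

lemma cheb {X : Ω → ℝ} (hm : Measurable X) (hint : Integrable (fun ω => (X ω - 1) ^ 2) P)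
    {ε : ℝ} (hε : 0 < ε) :
    P {ω | ε ≤ |X ω - 1|} ≤ ENNReal.ofReal ((∫ ω, (X ω - 1) ^ 2 ∂P) / ε ^ 2) := by
  set I := ∫ ω, (X ω - 1) ^ 2 ∂P with hI
  have hnn : 0 ≤ᵐ[P] fun ω => (X ω - 1) ^ 2 := Eventually.of_forall fun ω => sq_nonneg _
  have hlin : ∫⁻ ω, ENNReal.ofReal ((X ω - 1) ^ 2) ∂P = ENNReal.ofReal I :=
    (ofReal_integral_eq_lintegral_ofReal hint hnn).symm
  have haem : AEMeasurable (fun ω => ENNReal.ofReal ((X ω - 1) ^ 2)) P :=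
    (ENNReal.measurable_ofReal.comp ((hm.sub measurable_const).pow_const 2)).aemeasurable
  have hmul := mul_meas_ge_le_lintegral₀ haem (ENNReal.ofReal (ε ^ 2))
  rw [hlin] at hmul
  have hmono : P {ω | ε ≤ |X ω - 1|} ≤
      P {ω | ENNReal.ofReal (ε ^ 2) ≤ ENNReal.ofReal ((X ω - 1) ^ 2)} := by
    apply measure_mono
    intro ω hω
    simp only [mem_setOf_eq] at hω ⊢
    apply ENNReal.ofReal_le_ofReal
    calc ε ^ 2 ≤ |X ω - 1| ^ 2 := pow_le_pow_left₀ hε.le hω 2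
      _ = (X ω - 1) ^ 2 := sq_abs _
  have h2 : P {ω | ENNReal.ofReal (ε ^ 2) ≤ ENNReal.ofReal ((X ω - 1) ^ 2)} ≤
      ENNReal.ofReal I / ENNReal.ofReal (ε ^ 2) := by
    rw [ENNReal.le_div_iff_mul_le
      (Or.inl (ENNReal.ofReal_pos.2 (by positivity)).ne') (Or.inl ENNReal.ofReal_ne_top)]
    calc P {ω | ENNReal.ofReal (ε ^ 2) ≤ ENNReal.ofReal ((X ω - 1) ^ 2)} * ENNReal.ofReal (ε ^ 2)
        = ENNReal.ofReal (ε ^ 2) *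
          P {ω | ENNReal.ofReal (ε ^ 2) ≤ ENNReal.ofReal ((X ω - 1) ^ 2)} := mul_comm _ _
      _ ≤ ENNReal.ofReal I := hmul
  calc P {ω | ε ≤ |X ω - 1|}
      ≤ ENNReal.ofReal I / ENNReal.ofReal (ε ^ 2) := le_trans hmono h2
    _ = ENNReal.ofReal (I / ε ^ 2) := (ENNReal.ofReal_div_of_pos (by positivity)).symm

end Stmt12Aux

theorem stmt12 {Ω : Type*} [MeasurableSpace Ω] (P : Measure Ω)
    [IsProbabilityMeasure P]
    (f : ℕ → Ω → ℝ)
    (hfmeas : ∀ n, Measurable (f n))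
    (hindep : ProbabilityTheory.iIndepFun f P)
    (hdist : ∀ n, P {ω | f n ω = 0} = 1 / 2 ∧ P {ω | f n ω = 2} = 1 / 2) :
    (∀ (h : ℕ → Ω → ℝ) (g : Ω → ENNReal), FwdConvexCombos f h → Measurable g →
      (∀ᵐ ω ∂P, Tendsto (fun n => ENNReal.ofReal (h n ω)) atTop (nhds (g ω))) →
      g =ᵐ[P] fun _ => (1 : ENNReal)) ∧
    (∃ h : ℕ → Ω → ℝ, FwdConvexCombos f h ∧
      ∀ᵐ ω ∂P, Tendsto (fun n => h n ω) atTop (nhds (1 : ℝ))) := by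
  classical
  have hAA : ∀ᵐ ω ∂P, ∀ k, f k ω = 0 ∨ f k ω = 2 :=
    ae_all_iff.2 fun k => Stmt12Aux.ae_zero_or_two hfmeas hdist k
  constructor
  · -- Part 1: uniqueness of the limit
    intro h g hfc hgmeas hconv
    choose s u hu0 hu1 hsn hrep using fun n => Stmt12Aux.rep_of_mem (f := f) (hfc n)
    set g' : Ω → ℝ := fun ω => (g ω).toReal with hg'def
    have hg'meas : Measurable g' := hgmeas.ennreal_toReal
    have hb : ∀ᵐ ω ∂P, ∀ n, 0 ≤ h n ω ∧ h n ω ≤ 2 := by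
      filter_upwards [hAA] with ω hω n
      rw [hrep n]
      exact Stmt12Aux.combo_bounds (hu0 n) (hu1 n) hω
    have hconv' : ∀ᵐ ω ∂P,
        Tendsto (fun n => h n ω) atTop (nhds (g' ω)) ∧ 0 ≤ g' ω ∧ g' ω ≤ 2 := by
      filter_upwards [hconv, hb] with ω hc hbd
      have hle : g ω ≤ 2 := by
        refine le_of_tendsto hc (Eventually.of_forall fun n => ?_)
        calc ENNReal.ofReal (h n ω) ≤ ENNReal.ofReal 2 := ENNReal.ofReal_le_ofReal (hbd n).2
          _ = 2 := by norm_num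
      have hne : g ω ≠ ⊤ := (lt_of_le_of_lt hle (by norm_num)).ne
      have ht : Tendsto (fun n => (ENNReal.ofReal (h n ω)).toReal) atTop
          (nhds (g ω).toReal) := (ENNReal.tendsto_toReal hne).comp hc
      refine ⟨ht.congr fun n => ENNReal.toReal_ofReal (hbd n).1, ENNReal.toReal_nonneg, ?_⟩
      calc (g ω).toReal ≤ (2 : ENNReal).toReal := ENNReal.toReal_mono (by norm_num) hle
        _ = 2 := by norm_num
    have hhmeas : ∀ n, Measurable (h n) := by
      intro n
      have he : h n = fun ω => ∑ k ∈ s n, u n k * f k ω := funext (hrep n)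
      rw [he]
      exact Finset.measurable_sum _ fun k _ => (hfmeas k).const_mul _
    have hinth : ∀ n, ∫ ω, h n ω ∂P = 1 := by
      intro n
      rw [integral_congr_ae (Eventually.of_forall (hrep n)),
        Stmt12Aux.integral_combo hfmeas hdist, hu1 n]
    have hintg' : ∫ ω, g' ω ∂P = 1 := by
      have hT : Tendsto (fun n => ∫ ω, h n ω ∂P) atTop (nhds (∫ ω, g' ω ∂P)) := by
        refine tendsto_integral_of_dominated_convergence (fun _ => 2)
          (fun n => (hhmeas n).aestronglyMeasurable) (integrable_const 2) ?_ ?_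
        · intro n
          filter_upwards [hb] with ω hbd
          rw [Real.norm_eq_abs, abs_le]
          exact ⟨by linarith [(hbd n).1], (hbd n).2⟩
        · filter_upwards [hconv'] with ω hω using hω.1
      have he : (fun n => ∫ ω, h n ω ∂P) = fun _ => (1 : ℝ) := funext hinth
      rw [he] at hT
      exact tendsto_nhds_unique hT tendsto_const_nhds
    have hkey : ∀ n, ∫ ω, g' ω * h n ω ∂P = 1 := by
      intro n
      have hT : Tendsto (fun m => ∫ ω, h m ω * h n ω ∂P) atTop
          (nhds (∫ ω, g' ω * h n ω ∂P)) := by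
        refine tendsto_integral_of_dominated_convergence (fun _ => 4)
          (fun m => ((hhmeas m).mul (hhmeas n)).aestronglyMeasurable) (integrable_const 4) ?_ ?_
        · intro m
          filter_upwards [hb] with ω hbd
          rw [Real.norm_eq_abs, abs_mul]
          have h1 := hbd m
          have h2 := hbd n
          have e1 : |h m ω| ≤ 2 := abs_le.2 ⟨by linarith [h1.1], h1.2⟩
          have e2 : |h n ω| ≤ 2 := abs_le.2 ⟨by linarith [h2.1], h2.2⟩
          calc |h m ω| * |h n ω| ≤ 2 * 2 :=
                mul_le_mul e1 e2 (abs_nonneg _) (by norm_num)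
            _ = 4 := by norm_num
        · filter_upwards [hconv'] with ω hω using hω.1.mul_const _
      have hev : ∀ᶠ m in atTop, ∫ ω, h m ω * h n ω ∂P = 1 := by
        rw [eventually_atTop]
        refine ⟨(s n).sup id + 1, fun m hm => ?_⟩
        have hdisj : ∀ k ∈ s m, ∀ l ∈ s n, k ≠ l := by
          intro k hk l hl
          have h1 : l ≤ (s n).sup id := Finset.le_sup (f := id) hl
          have h2 : (s n).sup id + 1 ≤ k := le_trans hm (hsn m k hk)
          omega
        rw [integral_congr_ae (Eventually.of_forall fun ω => by rw [hrep m ω, hrep n ω]),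
          Stmt12Aux.integral_combo_mul hfmeas hindep hdist (s m) (s n) (u m) (u n)]
        calc (∑ k ∈ s m, ∑ l ∈ s n, u m k * u n l * (if k = l then 2 else 1))
            = ∑ k ∈ s m, ∑ l ∈ s n, u m k * u n l := by
              refine Finset.sum_congr rfl fun k hk => Finset.sum_congr rfl fun l hl => ?_
              rw [if_neg (hdisj k hk l hl), mul_one]
          _ = 1 := by rw [← Finset.sum_mul_sum, hu1 m, hu1 n, one_mul]
      have h1 : Tendsto (fun _ : ℕ => (1 : ℝ)) atTop (nhds (∫ ω, g' ω * h n ω ∂P)) :=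
        Tendsto.congr' hev hT
      exact (tendsto_nhds_unique h1 tendsto_const_nhds).symm.symm
    have hsq : ∫ ω, g' ω * g' ω ∂P = 1 := by
      have hT : Tendsto (fun n => ∫ ω, g' ω * h n ω ∂P) atTop
          (nhds (∫ ω, g' ω * g' ω ∂P)) := by
        refine tendsto_integral_of_dominated_convergence (fun _ => 4)
          (fun n => (hg'meas.mul (hhmeas n)).aestronglyMeasurable) (integrable_const 4) ?_ ?_
        · intro n
          filter_upwards [hb, hconv'] with ω hbd hg
          rw [Real.norm_eq_abs, abs_mul]
          have e1 : |g' ω| ≤ 2 := abs_le.2 ⟨by linarith [hg.2.1], hg.2.2⟩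
          have e2 : |h n ω| ≤ 2 := abs_le.2 ⟨by linarith [(hbd n).1], (hbd n).2⟩
          calc |g' ω| * |h n ω| ≤ 2 * 2 := mul_le_mul e1 e2 (abs_nonneg _) (by norm_num)
            _ = 4 := by norm_num
        · filter_upwards [hconv'] with ω hω using (hω.1.const_mul _)
      have he : (fun n => ∫ ω, g' ω * h n ω ∂P) = fun _ => (1 : ℝ) := funext hkey
      rw [he] at hT
      exact tendsto_nhds_unique hT tendsto_const_nhds
    have hg'int : Integrable g' P := by
      apply Stmt12Aux.integrable_of_ae_bound hg'meas.aestronglyMeasurable (C := 2)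
      filter_upwards [hconv'] with ω hω
      exact abs_le.2 ⟨by linarith [hω.2.1], hω.2.2⟩
    have hg'sqint : Integrable (fun ω => g' ω * g' ω) P := by
      apply Stmt12Aux.integrable_of_ae_bound (hg'meas.mul hg'meas).aestronglyMeasurable (C := 4)
      filter_upwards [hconv'] with ω hω
      rw [Pi.mul_apply, abs_mul]
      have e1 : |g' ω| ≤ 2 := abs_le.2 ⟨by linarith [hω.2.1], hω.2.2⟩
      calc |g' ω| * |g' ω| ≤ 2 * 2 := mul_le_mul e1 e1 (abs_nonneg _) (by norm_num)
        _ = 4 := by norm_num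
    have hint0 : ∫ ω, (g' ω - 1) ^ 2 ∂P = 0 := by
      have hcongr : ∫ ω, (g' ω - 1) ^ 2 ∂P =
          ∫ ω, (g' ω * g' ω - 2 * g' ω + 1) ∂P :=
        integral_congr_ae (Eventually.of_forall fun ω => by ring)
      have hfsub : Integrable (fun ω => g' ω * g' ω - 2 * g' ω) P :=
        hg'sqint.sub (hg'int.const_mul 2)
      rw [hcongr, integral_add hfsub (integrable_const 1),
        integral_sub hg'sqint (hg'int.const_mul 2), integral_const_mul, hsq, hintg',
        integral_const]
      simp only [measure_univ, ENNReal.toReal_one, smul_eq_mul, mul_one]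
      norm_num
    have hintsq : Integrable (fun ω => (g' ω - 1) ^ 2) P := by
      have he : (fun ω => (g' ω - 1) ^ 2) = fun ω => g' ω * g' ω - 2 * g' ω + 1 :=
        funext fun ω => by ring
      rw [he]
      exact (hg'sqint.sub (hg'int.const_mul 2)).add (integrable_const 1)
    have hzero : (fun ω => (g' ω - 1) ^ 2) =ᵐ[P] 0 :=
      (integral_eq_zero_iff_of_nonneg_ae (Eventually.of_forall fun ω => sq_nonneg _)
        hintsq).1 hint0
    have hg'one : ∀ᵐ ω ∂P, g' ω = 1 := by
      filter_upwards [hzero] with ω hω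
      have : (g' ω - 1) ^ 2 = 0 := hω
      have := pow_eq_zero_iff (n := 2) (by norm_num) |>.1 this
      linarith [sub_eq_zero.1 this]
    filter_upwards [hg'one] with ω hω
    exact (ENNReal.toReal_eq_one_iff (g ω)).1 hω
  · -- Part 2: existence
    set L : ℕ → ℕ := fun n => (n + 1) ^ 2 with hLdef
    set h : ℕ → Ω → ℝ :=
      fun n ω => (∑ k ∈ Finset.range (L n), f (n + k) ω) / (L n : ℝ) with hhdef
    have hLpos : ∀ n, 0 < (L n : ℝ) := fun n => by positivity
    have hrep : ∀ n ω, h n ω =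
        ∑ k ∈ (Finset.range (L n)).image (fun k => n + k), ((L n : ℝ))⁻¹ * f k ω := by
      intro n ω
      rw [Finset.sum_image (fun a _ b _ hab => by omega), ← Finset.mul_sum]
      exact div_eq_inv_mul _ _
    have hcard : ∀ n, ((Finset.range (L n)).image (fun k => n + k)).card = L n := by
      intro n
      rw [Finset.card_image_of_injective _ (fun a b hab => by omega), Finset.card_range]
    have hsum1 : ∀ n, ∑ k ∈ (Finset.range (L n)).image (fun k => n + k),
        ((L n : ℝ))⁻¹ = 1 := by
      intro n
      rw [Finset.sum_const, hcard n, nsmul_eq_mul, mul_inv_cancel₀ (hLpos n).ne']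
    have hfc : FwdConvexCombos f h := by
      intro n
      have hcm : h n = (Finset.range (L n)).centerMass (fun _ => (1 : ℝ))
          (fun k => f (n + k)) := by
        funext ω
        rw [Finset.centerMass]
        simp only [Finset.sum_apply, Pi.smul_apply, one_smul, smul_eq_mul,
          Finset.sum_const, Finset.card_range, nsmul_eq_mul, mul_one]
        rw [hrep n ω, Finset.sum_image (fun a _ b _ hab => by omega), ← Finset.mul_sum]
      rw [hcm]
      refine Finset.centerMass_mem_convexHull _ (fun i _ => zero_le_one) ?_ ?_
      · rw [Finset.sum_const, Finset.card_range, nsmul_eq_mul, mul_one]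
        exact_mod_cast pow_pos (Nat.succ_pos n) 2
      · intro k _
        exact ⟨n + k, Nat.le_add_right n k, rfl⟩
    have hhmeas : ∀ n, Measurable (h n) := by
      intro n
      have he : h n = fun ω => ∑ k ∈ (Finset.range (L n)).image (fun k => n + k),
          ((L n : ℝ))⁻¹ * f k ω := funext (hrep n)
      rw [he]
      exact Finset.measurable_sum _ fun k _ => (hfmeas k).const_mul _
    have hb : ∀ᵐ ω ∂P, ∀ n, 0 ≤ h n ω ∧ h n ω ≤ 2 := by
      filter_upwards [hAA] with ω hω n
      rw [hrep n]
      exact Stmt12Aux.combo_bounds (fun k _ => by positivity) (hsum1 n) hω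
    have hinth : ∀ n, ∫ ω, h n ω ∂P = 1 := by
      intro n
      rw [integral_congr_ae (Eventually.of_forall (hrep n)),
        Stmt12Aux.integral_combo hfmeas hdist, hsum1 n]
    have hsq : ∀ n, ∫ ω, h n ω * h n ω ∂P = 1 + 1 / (L n : ℝ) := by
      intro n
      set t := (Finset.range (L n)).image (fun k => n + k) with htdef
      rw [integral_congr_ae (Eventually.of_forall fun ω => by rw [hrep n ω]),
        Stmt12Aux.integral_combo_mul hfmeas hindep hdist t t _ _]
      have hstep : ∀ k ∈ t, (∑ l ∈ t, ((L n : ℝ))⁻¹ * ((L n : ℝ))⁻¹ *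
          (if k = l then 2 else 1)) = ((L n : ℝ))⁻¹ * ((L n : ℝ))⁻¹ * ((L n : ℝ) + 1) := by
        intro k hk
        have he : ∀ l, ((L n : ℝ))⁻¹ * ((L n : ℝ))⁻¹ * (if k = l then 2 else 1) =
            ((L n : ℝ))⁻¹ * ((L n : ℝ))⁻¹ +
              (if k = l then ((L n : ℝ))⁻¹ * ((L n : ℝ))⁻¹ else 0) := by
          intro l
          by_cases hkl : k = l <;> simp [hkl] <;> ring
        rw [Finset.sum_congr rfl fun l _ => he l, Finset.sum_add_distrib,
          Finset.sum_const, hcard n, Finset.sum_ite_eq t k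
            (fun _ => ((L n : ℝ))⁻¹ * ((L n : ℝ))⁻¹), if_pos hk, nsmul_eq_mul]
        ring
      rw [Finset.sum_congr rfl hstep, Finset.sum_const, hcard n, nsmul_eq_mul]
      field_simp
      rw [add_div, div_self (hLpos n).ne']
    have hvar : ∀ n, ∫ ω, (h n ω - 1) ^ 2 ∂P = 1 / (L n : ℝ) := by
      intro n
      have hint1 : Integrable (h n) P := by
        apply Stmt12Aux.integrable_of_ae_bound (hhmeas n).aestronglyMeasurable (C := 2)
        filter_upwards [hb] with ω hω
        exact abs_le.2 ⟨by linarith [(hω n).1], (hω n).2⟩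
      have hint2 : Integrable (fun ω => h n ω * h n ω) P := by
        apply Stmt12Aux.integrable_of_ae_bound
          ((hhmeas n).mul (hhmeas n)).aestronglyMeasurable (C := 4)
        filter_upwards [hb] with ω hω
        rw [Pi.mul_apply, abs_mul]
        have e1 : |h n ω| ≤ 2 := abs_le.2 ⟨by linarith [(hω n).1], (hω n).2⟩
        calc |h n ω| * |h n ω| ≤ 2 * 2 := mul_le_mul e1 e1 (abs_nonneg _) (by norm_num)
          _ = 4 := by norm_num
      have hcongr : ∫ ω, (h n ω - 1) ^ 2 ∂P =
          ∫ ω, (h n ω * h n ω - 2 * h n ω + 1) ∂P :=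
        integral_congr_ae (Eventually.of_forall fun ω => by ring)
      have hfsub : Integrable (fun ω => h n ω * h n ω - 2 * h n ω) P :=
        hint2.sub (hint1.const_mul 2)
      rw [hcongr, integral_add hfsub (integrable_const 1),
        integral_sub hint2 (hint1.const_mul 2), integral_const_mul, hsq n, hinth n,
        integral_const]
      simp only [probReal_univ, ENNReal.toReal_one, smul_eq_mul, mul_one]
      ring
    have hintsq : ∀ n, Integrable (fun ω => (h n ω - 1) ^ 2) P := by
      intro n
      apply Stmt12Aux.integrable_of_ae_bound
        (((hhmeas n).sub measurable_const).pow_const 2).aestronglyMeasurable (C := 1)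
      filter_upwards [hb] with ω hω
      rw [abs_of_nonneg (sq_nonneg _)]
      rw [Pi.sub_apply]; nlinarith [(hω n).1, (hω n).2]
    have hsummable : Summable (fun n : ℕ => 1 / ((n : ℝ) + 1) ^ 2) := by
      have h1 : Summable (fun n : ℕ => 1 / (n : ℝ) ^ 2) :=
        Real.summable_one_div_nat_pow.2 (by norm_num)
      have h2 := (summable_nat_add_iff 1).2 h1
      refine h2.congr fun n => ?_
      push_cast
      ring
    have hBC : ∀ q : ℕ, ∀ᵐ ω ∂P, ∀ᶠ n in atTop, ¬(1 / ((q : ℝ) + 1) ≤ |h n ω - 1|) := by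
      intro q
      set ε : ℝ := 1 / ((q : ℝ) + 1) with hεdef
      have hεpos : 0 < ε := by positivity
      have hle : ∀ n, P {ω | ε ≤ |h n ω - 1|} ≤
          ENNReal.ofReal ((1 / ((n : ℝ) + 1) ^ 2) / ε ^ 2) := by
        intro n
        have hc := Stmt12Aux.cheb (hhmeas n) (hintsq n) hεpos
        rw [hvar n] at hc
        have hLcast : (L n : ℝ) = ((n : ℝ) + 1) ^ 2 := by
          rw [hLdef]; push_cast; ring
        rw [hLcast] at hc
        exact hc
      have hsum : (∑' n, P {ω | ε ≤ |h n ω - 1|}) ≠ ⊤ := by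
        refine ne_top_of_le_ne_top (b := ENNReal.ofReal
          (∑' n : ℕ, (1 / ((n : ℝ) + 1) ^ 2) / ε ^ 2)) ENNReal.ofReal_ne_top ?_
        calc (∑' n, P {ω | ε ≤ |h n ω - 1|})
            ≤ ∑' n : ℕ, ENNReal.ofReal ((1 / ((n : ℝ) + 1) ^ 2) / ε ^ 2) :=
              ENNReal.tsum_le_tsum hle
          _ = ENNReal.ofReal (∑' n : ℕ, (1 / ((n : ℝ) + 1) ^ 2) / ε ^ 2) :=
              (ENNReal.ofReal_tsum_of_nonneg (fun n => by positivity)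
                (hsummable.div_const _)).symm
      have := ae_eventually_notMem hsum
      filter_upwards [this] with ω hω
      exact hω
    have hae2 : ∀ᵐ ω ∂P, ∀ q : ℕ, ∀ᶠ n in atTop, ¬(1 / ((q : ℝ) + 1) ≤ |h n ω - 1|) :=
      ae_all_iff.2 hBC
    refine ⟨h, hfc, ?_⟩
    filter_upwards [hae2] with ω hω
    rw [Metric.tendsto_atTop]
    intro ε hε
    obtain ⟨q, hq⟩ := exists_nat_one_div_lt hε
    obtain ⟨N, hN⟩ := eventually_atTop.1 (hω q)
    refine ⟨N, fun n hn => ?_⟩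
    have hlt := not_le.1 (hN n hn)
    rw [Real.dist_eq]
    exact lt_trans hlt hq
end
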